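/- arXiv:2005.05459 — 5 statements merged into one kernel-verified Lean document; each statement's English description precedes it below -/
import Mathlib

section
/- Let S > 0 and let κ, σ : [0,S] → ℝ be continuous. Suppose B : [0,S] → ℝ is differentiable and satisfies the Riccati equation B'(t) = 1 + κ(t)B(t) − (1/2)σ(t)²B(t)² for all t ∈ [0,S], with terminal condition B(S) = 0. Then B(t) < 0 for every t ∈ [0,S). -/
/-- If `B` has derivative `1` at a zero `t`, then `B` is positive just to the right of `t`. -/
lemma riccati_aux_pos_right {B : ℝ → ℝ} {t : ℝ} (h : HasDerivAt B 1 t) (h0 : B t = 0) :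
    ∀ᶠ x in nhdsWithin t (Set.Ioi t), 0 < B x := by
  have hs := hasDerivAt_iff_tendsto_slope.1 h
  have hs' : Filter.Tendsto (slope B t) (nhdsWithin t (Set.Ioi t)) (nhds 1) :=
    hs.mono_left (nhdsWithin_mono t (fun x hx => ne_of_gt hx))
  have hev := hs'.eventually (eventually_gt_nhds (by norm_num : (0:ℝ) < 1))
  filter_upwards [hev, self_mem_nhdsWithin] with x hx hx'
  have hslope : slope B t x = B x / (x - t) := by
    simp [slope, h0, div_eq_inv_mul]
  rw [hslope] at hx
  have hxt : 0 < x - t := sub_pos.mpr hx'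
  have := mul_pos hx hxt
  rwa [div_mul_cancel₀ _ (ne_of_gt hxt)] at this

/-- If `B` has derivative `1` at a zero `t`, then `B` is negative just to the left of `t`. -/
lemma riccati_aux_neg_left {B : ℝ → ℝ} {t : ℝ} (h : HasDerivAt B 1 t) (h0 : B t = 0) :
    ∀ᶠ x in nhdsWithin t (Set.Iio t), B x < 0 := by
  have hs := hasDerivAt_iff_tendsto_slope.1 h
  have hs' : Filter.Tendsto (slope B t) (nhdsWithin t (Set.Iio t)) (nhds 1) :=
    hs.mono_left (nhdsWithin_mono t (fun x hx => ne_of_lt hx))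
  have hev := hs'.eventually (eventually_gt_nhds (by norm_num : (0:ℝ) < 1))
  filter_upwards [hev, self_mem_nhdsWithin] with x hx hx'
  have hslope : slope B t x = B x / (x - t) := by
    simp [slope, h0, div_eq_inv_mul]
  rw [hslope] at hx
  have hxt : x - t < 0 := sub_neg.mpr hx'
  have := mul_neg_of_pos_of_neg hx hxt
  rwa [div_mul_cancel₀ _ (ne_of_lt hxt)] at this

/-- the Riccati coefficient `B` of the affine CIR bond price, solving
`B' = 1 + κB − (1/2)σ²B²` with `B(S) = 0`, is strictly negative on `[0,S)`. -/
theorem riccati_B_neg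
    (S : ℝ) (hS : 0 < S)
    (κ σ : ℝ → ℝ)
    (hκ : ContinuousOn κ (Set.Icc 0 S)) (hσ : ContinuousOn σ (Set.Icc 0 S))
    (B : ℝ → ℝ)
    (hB : ∀ t ∈ Set.Icc (0 : ℝ) S,
      HasDerivAt B (1 + κ t * B t - 1 / 2 * (σ t) ^ 2 * (B t) ^ 2) t)
    (hBS : B S = 0) :
    ∀ t ∈ Set.Ico (0 : ℝ) S, B t < 0 := by
  intro t₀ ht₀
  by_contra hge
  push_neg at hge
  -- derivative at S is 1
  have hdS : HasDerivAt B 1 S := by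
    have := hB S ⟨le_of_lt hS, le_refl S⟩
    simpa [hBS] using this
  have hneg := riccati_aux_neg_left hdS hBS
  -- find u with t₀ < u < S and B u < 0
  have h2 : ∀ᶠ x in nhdsWithin S (Set.Iio S), t₀ < x :=
    eventually_nhdsWithin_of_eventually_nhds (eventually_gt_nhds ht₀.2)
  obtain ⟨u, hBu, hu1, hu2⟩ := (hneg.and (h2.and self_mem_nhdsWithin)).exists
  have hu2 : u < S := hu2
  -- the set of points in [t₀,u] where B ≥ 0
  set A : Set ℝ := Set.Icc t₀ u ∩ B ⁻¹' Set.Ici 0 with hA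
  have hsub : A ⊆ Set.Icc t₀ u := Set.inter_subset_left
  have hIccsub : Set.Icc t₀ u ⊆ Set.Icc 0 S :=
    Set.Icc_subset_Icc ht₀.1 (le_of_lt hu2)
  have hBc : ContinuousOn B (Set.Icc t₀ u) := fun x hx =>
    ((hB x (hIccsub hx)).continuousAt).continuousWithinAt
  have hAclosed : IsClosed A :=
    hBc.preimage_isClosed_of_isClosed isClosed_Icc isClosed_Ici
  have hAcompact : IsCompact A :=
    isCompact_Icc.of_isClosed_subset hAclosed hsub
  have hAne : A.Nonempty := ⟨t₀, ⟨le_refl t₀, le_of_lt hu1⟩, hge⟩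
  obtain hc := hAcompact.sSup_mem hAne
  set c := sSup A with hcdef
  have hcA : c ∈ A := hc
  have hct₀ : t₀ ≤ c := (hsub hcA).1
  have hcu : c ≤ u := (hsub hcA).2
  have hcS : c < S := lt_of_le_of_lt hcu hu2
  have hcne : c ≠ u := by
    intro h
    rw [h] at hcA
    exact absurd hcA.2 (not_le.mpr hBu)
  have hcu' : c < u := lt_of_le_of_ne hcu hcne
  -- B < 0 on (c, u]
  have hright : ∀ x ∈ Set.Ioc c u, B x < 0 := by
    intro x hx
    by_contra hge'
    push_neg at hge'
    have hxA : x ∈ A := ⟨⟨le_trans hct₀ (le_of_lt hx.1), hx.2⟩, hge'⟩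
    have := le_csSup (hAcompact.bddAbove) hxA
    exact absurd this (not_le.mpr hx.1)
  -- B c = 0
  have hBc0 : B c = 0 := by
    have hcont : ContinuousAt B c :=
      (hB c (hIccsub ⟨hct₀, hcu⟩)).continuousAt
    have htend : Filter.Tendsto B (nhdsWithin c (Set.Ioi c)) (nhds (B c)) :=
      hcont.continuousWithinAt.tendsto
    have hmem : Set.Ioc c u ∈ nhdsWithin c (Set.Ioi c) :=
      Ioc_mem_nhdsGT_of_mem ⟨le_refl c, hcu'⟩
    have hev : ∀ᶠ x in nhdsWithin c (Set.Ioi c), B x ≤ 0 := by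
      filter_upwards [hmem] with x hx
      exact le_of_lt (hright x hx)
    have hle : B c ≤ 0 := le_of_tendsto htend hev
    exact le_antisymm hle hcA.2
  -- derivative at c is 1
  have hdc : HasDerivAt B 1 c := by
    have := hB c (hIccsub ⟨hct₀, hcu⟩)
    simpa [hBc0] using this
  have hpos := riccati_aux_pos_right hdc hBc0
  have hmem : Set.Ioc c u ∈ nhdsWithin c (Set.Ioi c) :=
    Ioc_mem_nhdsGT_of_mem ⟨le_refl c, hcu'⟩
  obtain ⟨x, hx1, hx2⟩ := (hpos.and (Filter.eventually_of_mem hmem (fun x hx => hx))).exists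
  exact absurd hx1 (not_lt.mpr (le_of_lt (hright x hx2)))
end

section
/- Let S > 0, κ ∈ ℝ, σ > 0, and set h = √(κ² + 2σ²). Define B : (−∞,S] → ℝ by B(t) = −2(e^{(S−t)h} − 1)/(2h + (κ+h)(e^{(S−t)h} − 1)). Then: (i) the denominator 2h + (κ+h)(e^{(S−t)h} − 1) is strictly positive for all t ≤ S; (ii) B(S) = 0; (iii) B is differentiable and satisfies B'(t) = 1 + κB(t) − (1/2)σ²B(t)² for all t ≤ S; and (iv) B(t) < 0 for all t < S. -/
/-- the closed-form CIR Riccati coefficient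
`B(t) = −2(e^{(S−t)h} − 1)/(2h + (κ+h)(e^{(S−t)h} − 1))` with `h = √(κ² + 2σ²)`
has positive denominator, vanishes at `t = S`, solves the Riccati equation
`B' = 1 + κB − (1/2)σ²B²` on `(−∞,S]`, and is strictly negative for `t < S`. -/
theorem riccati_B_closed_form
    (S κ σ : ℝ) (hS : 0 < S) (hσ : 0 < σ)
    (h : ℝ) (hh : h = Real.sqrt (κ ^ 2 + 2 * σ ^ 2))
    (B : ℝ → ℝ)
    (hB : ∀ t, B t = -2 * (Real.exp ((S - t) * h) - 1) /
      (2 * h + (κ + h) * (Real.exp ((S - t) * h) - 1))) :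
    (∀ t ≤ S, 0 < 2 * h + (κ + h) * (Real.exp ((S - t) * h) - 1))
    ∧ B S = 0
    ∧ (∀ t ≤ S, HasDerivAt B (1 + κ * B t - 1 / 2 * σ ^ 2 * (B t) ^ 2) t)
    ∧ (∀ t < S, B t < 0) := by
  have hpos : 0 < κ ^ 2 + 2 * σ ^ 2 := by positivity
  have hh2 : h ^ 2 = κ ^ 2 + 2 * σ ^ 2 := by
    rw [hh]; exact Real.sq_sqrt hpos.le
  have hpos_h : 0 < h := by rw [hh]; exact Real.sqrt_pos.mpr hpos
  have hkh : 0 ≤ κ + h := by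
    by_contra hc
    push_neg at hc
    nlinarith [sq_nonneg σ]
  have hden : ∀ t ≤ S, 0 < 2 * h + (κ + h) * (Real.exp ((S - t) * h) - 1) := by
    intro t ht
    have hE : 1 ≤ Real.exp ((S - t) * h) := by
      rw [← Real.exp_zero]
      exact Real.exp_le_exp.mpr (by nlinarith)
    nlinarith
  refine ⟨hden, ?_, ?_, ?_⟩
  · rw [hB S]; simp
  · intro t ht
    have hD := hden t ht
    set E := Real.exp ((S - t) * h) with hEdef
    have hDne : 2 * h + (κ + h) * (E - 1) ≠ 0 := ne_of_gt hD
    have hE' : HasDerivAt (fun t => Real.exp ((S - t) * h)) (Real.exp ((S - t) * h) * (-1 * h)) t := by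
      exact (((hasDerivAt_id t).const_sub S).mul_const h).exp
    have hN : HasDerivAt (fun t => -2 * (Real.exp ((S - t) * h) - 1))
        (-2 * (Real.exp ((S - t) * h) * (-1 * h))) t := (hE'.sub_const 1).const_mul (-2)
    have hDd : HasDerivAt (fun t => 2 * h + (κ + h) * (Real.exp ((S - t) * h) - 1))
        ((κ + h) * (Real.exp ((S - t) * h) * (-1 * h))) t :=
      ((hE'.sub_const 1).const_mul (κ + h)).const_add (2 * h)
    have hBd : HasDerivAt (fun t => -2 * (Real.exp ((S - t) * h) - 1) /
        (2 * h + (κ + h) * (Real.exp ((S - t) * h) - 1))) _ t := hN.div hDd hDne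
    have hfun : B = fun t => -2 * (Real.exp ((S - t) * h) - 1) /
        (2 * h + (κ + h) * (Real.exp ((S - t) * h) - 1)) := funext hB
    rw [← hfun] at hBd
    convert hBd using 1
    rw [hB t]
    have hσ2 : σ ^ 2 = (h ^ 2 - κ ^ 2) / 2 := by linarith
    rw [hσ2]
    have hDne' : 2 * h + (Real.exp ((S - t) * h) - 1) * (κ + h) ≠ 0 := by rw [mul_comm (Real.exp ((S - t) * h) - 1)]; exact hDne
    field_simp
    ring
  · intro t ht
    have hD := hden t ht.le
    rw [hB t]
    apply div_neg_of_neg_of_pos _ hD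
    have : 1 < Real.exp ((S - t) * h) := by
      rw [← Real.exp_zero]
      exact Real.exp_lt_exp.mpr (by nlinarith)
    nlinarith
end

section
/- Let b ∈ ℝ and let U be an open subset of ℝ × (0,∞). Suppose u : ℝ × ℝ → ℝ is C¹ in its first variable and C² in its second variable on U and satisfies ∂u/∂τ = (1/2)∂²u/∂z² + (b/z)∂u/∂z on U. Then the function w(τ,z) := z^{2b−1}·u(τ,z) satisfies ∂w/∂τ = (1/2)∂²w/∂z² + ((1−b)/z)∂w/∂z on U. In particular, for b = m − 1/2 the transformed equation is the Bessel PDE with parameter (3−2m)/2. -/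
/-- the power change of dependent variable `w = z^{2b−1}u` maps solutions
of the Bessel PDE with parameter `b` to solutions of the Bessel PDE with parameter
`1 − b`; in particular `b = m − 1/2` is mapped to `(3−2m)/2`. -/
theorem bessel_pde_power_transform
    (b : ℝ) (U : Set (ℝ × ℝ)) (hU : IsOpen U)
    (hUpos : ∀ p ∈ U, 0 < p.2)
    (u : ℝ → ℝ → ℝ)
    (hsmooth : ∀ p ∈ U,
      ContDiffAt ℝ 1 (fun t => u t p.2) p.1 ∧ ContDiffAt ℝ 2 (fun z => u p.1 z) p.2)
    (hPDE : ∀ p ∈ U,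
      deriv (fun t => u t p.2) p.1
        = 1 / 2 * deriv (fun z => deriv (fun z' => u p.1 z') z) p.2
          + b / p.2 * deriv (fun z => u p.1 z) p.2)
    (w : ℝ → ℝ → ℝ)
    (hw : ∀ t z, w t z = z ^ (2 * b - 1) * u t z) :
    (∀ p ∈ U,
      deriv (fun t => w t p.2) p.1
        = 1 / 2 * deriv (fun z => deriv (fun z' => w p.1 z') z) p.2
          + (1 - b) / p.2 * deriv (fun z => w p.1 z) p.2)
    ∧ ∀ m : ℝ, b = m - 1 / 2 → 1 - b = (3 - 2 * m) / 2 := by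
  refine ⟨?_, fun m hm => by rw [hm]; ring⟩
  rintro ⟨t, z⟩ hp
  have hz : 0 < z := hUpos _ hp
  obtain ⟨hcd1, hcd2⟩ := hsmooth _ hp
  have hpde := hPDE _ hp
  simp only at hcd1 hcd2 hpde ⊢
  -- second space derivative of u exists at z
  obtain ⟨s₀, hs₀, hcds₀⟩ := hcd2.contDiffOn le_rfl (by simp)
  obtain ⟨s, hss, hsopen, hzs⟩ := mem_nhds_iff.1 hs₀
  have hcds : ContDiffOn ℝ 2 (fun x => u t x) s := hcds₀.mono hss
  have hderivC1 : ContDiffOn ℝ 1 (deriv (fun x => u t x)) s := by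
    refine hcds.deriv_of_isOpen hsopen ?_
    norm_num
  have hu2 : DifferentiableAt ℝ (deriv (fun x => u t x)) z :=
    ((hderivC1 z hzs).contDiffAt (hsopen.mem_nhds hzs)).differentiableAt (by norm_num)
  -- first space derivative of w at points of U
  have hwfun : ∀ τ : ℝ, (fun x => w τ x) = fun x => x ^ (2 * b - 1) * u τ x :=
    fun τ => funext fun x => hw τ x
  have hd1 : ∀ z' : ℝ, (t, z') ∈ U →
      HasDerivAt (fun x => w t x)
        ((2 * b - 1) * z' ^ (2 * b - 2) * u t z'
          + z' ^ (2 * b - 1) * deriv (fun x => u t x) z') z' := by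
    intro z' hz'U
    have hz' : (0:ℝ) < z' := hUpos _ hz'U
    have hrp : HasDerivAt (fun x : ℝ => x ^ (2 * b - 1))
        ((2 * b - 1) * z' ^ (2 * b - 1 - 1)) z' :=
      Real.hasDerivAt_rpow_const (Or.inl hz'.ne')
    have hu : HasDerivAt (fun x => u t x) (deriv (fun x => u t x) z') z' :=
      ((hsmooth _ hz'U).2.differentiableAt (by norm_num)).hasDerivAt
    have h := hrp.mul hu
    rw [show (2 * b - 1 - 1 : ℝ) = 2 * b - 2 by ring] at h
    rw [hwfun t]
    exact h
  -- time derivative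
  have hutd : DifferentiableAt ℝ (fun τ => u τ z) t := hcd1.differentiableAt (by norm_num)
  have htime : deriv (fun τ => w τ z) t = z ^ (2 * b - 1) * deriv (fun τ => u τ z) t := by
    have : (fun τ => w τ z) = fun τ => z ^ (2 * b - 1) * u τ z := funext fun τ => hw τ z
    rw [this, deriv_const_mul _ hutd]
  -- neighborhood membership
  have hevU : ∀ᶠ z' in nhds z, (t, z') ∈ U :=
    ((hU.preimage (Continuous.prodMk_right t)).mem_nhds hp)
  have hev1 : deriv (fun x => w t x) =ᶠ[nhds z]
      fun z' => (2 * b - 1) * z' ^ (2 * b - 2) * u t z'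
        + z' ^ (2 * b - 1) * deriv (fun x => u t x) z' := by
    filter_upwards [hevU] with z' hz'U
    exact (hd1 z' hz'U).deriv
  -- second space derivative of w
  have hrp1 : HasDerivAt (fun x : ℝ => x ^ (2 * b - 2))
      ((2 * b - 2) * z ^ (2 * b - 2 - 1)) z :=
    Real.hasDerivAt_rpow_const (Or.inl hz.ne')
  have hrp2 : HasDerivAt (fun x : ℝ => x ^ (2 * b - 1))
      ((2 * b - 1) * z ^ (2 * b - 1 - 1)) z :=
    Real.hasDerivAt_rpow_const (Or.inl hz.ne')
  have hu1 : HasDerivAt (fun x => u t x) (deriv (fun x => u t x) z) z :=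
    (hcd2.differentiableAt (by norm_num)).hasDerivAt
  have hF : HasDerivAt (fun z' => (2 * b - 1) * z' ^ (2 * b - 2) * u t z'
        + z' ^ (2 * b - 1) * deriv (fun x => u t x) z')
      ((2 * b - 1) * ((2 * b - 2) * z ^ (2 * b - 2 - 1)) * u t z
        + (2 * b - 1) * z ^ (2 * b - 2) * deriv (fun x => u t x) z
        + ((2 * b - 1) * z ^ (2 * b - 1 - 1) * deriv (fun x => u t x) z
          + z ^ (2 * b - 1) * deriv (deriv (fun x => u t x)) z)) z := by
    exact (((hrp1.const_mul (2 * b - 1)).mul hu1).add (hrp2.mul hu2.hasDerivAt))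
  have hsecond : deriv (deriv (fun x => w t x)) z
      = (2 * b - 1) * ((2 * b - 2) * z ^ (2 * b - 2 - 1)) * u t z
        + (2 * b - 1) * z ^ (2 * b - 2) * deriv (fun x => u t x) z
        + ((2 * b - 1) * z ^ (2 * b - 1 - 1) * deriv (fun x => u t x) z
          + z ^ (2 * b - 1) * deriv (deriv (fun x => u t x)) z) := by
    rw [hev1.deriv_eq]
    exact hF.deriv
  have hfirst : deriv (fun x => w t x) z
      = (2 * b - 1) * z ^ (2 * b - 2) * u t z
        + z ^ (2 * b - 1) * deriv (fun x => u t x) z := (hd1 z hp).deriv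
  -- rpow algebra
  have e1 : z ^ (2 * b - 2) = z ^ (2 * b - 1) / z := by
    rw [show (2 * b - 2 : ℝ) = (2 * b - 1) - 1 by ring, Real.rpow_sub hz, Real.rpow_one]
  have e2 : z ^ (2 * b - 1 - 1) = z ^ (2 * b - 1) / z := by
    rw [Real.rpow_sub hz, Real.rpow_one]
  have e3 : z ^ (2 * b - 2 - 1) = z ^ (2 * b - 1) / (z * z) := by
    rw [show (2 * b - 2 - 1 : ℝ) = (2 * b - 1) - 2 by ring, Real.rpow_sub hz]
    norm_num [Real.rpow_two]
    ring_nf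
  rw [htime, hsecond, hfirst, hpde, e1, e2, e3]
  field_simp
  ring
end

section
/- Let b ≥ 1/2 and ζ > 0. Define I_ν(x) = Σ_{k=0}^∞ (x/2)^{2k+ν}/(k!·Γ(k+ν+1)) for x > 0, and q_τ(z,ζ,b) = (√(zζ)/τ)·(ζ/z)^b·exp(−(z²+ζ²)/(2τ))·I_{b−1/2}(zζ/τ) for τ, z > 0. Then the function G(τ,z) := q_τ(z,ζ,b) is C¹ in τ and C² in z on (0,∞) × (0,∞) and satisfies ∂G/∂τ = (1/2)∂²G/∂z² + (b/z)∂G/∂z there. -/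
/-- Modified Bessel function of the first kind,
`I_ν(x) = Σ_{k=0}^∞ (x/2)^{2k+ν}/(k!·Γ(k+ν+1))`. -/
noncomputable def besselI (ν x : ℝ) : ℝ :=
  ∑' k : ℕ, (x / 2) ^ (2 * (k : ℝ) + ν) / ((Nat.factorial k : ℝ) * Real.Gamma ((k : ℝ) + ν + 1))

/-- Bessel heat kernel
`q_s(z,ζ,b) = (√(zζ)/s)·(ζ/z)^b·exp(−(z²+ζ²)/(2s))·I_{b−1/2}(zζ/s)`. -/
noncomputable def besselKernel (b s z ζ : ℝ) : ℝ :=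
  Real.sqrt (z * ζ) / s * (ζ / z) ^ b * Real.exp (-(z ^ 2 + ζ ^ 2) / (2 * s)) *
    besselI (b - 1 / 2) (z * ζ / s)

open Real

/-- sum of a power series -/
noncomputable def psum (a : ℕ → ℝ) (u : ℝ) : ℝ := ∑' k : ℕ, a k * u ^ k

/-- coefficients of the derivative series -/
noncomputable def dcoef (a : ℕ → ℝ) (k : ℕ) : ℝ := (k + 1) * a (k + 1)

/-- factorial-type bound predicate -/
def FacBound (a : ℕ → ℝ) (B q : ℝ) : Prop := 0 ≤ q ∧ ∀ k, |a k| ≤ B * q ^ k / (Nat.factorial k)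

lemma FacBound.B_nonneg {a B q} (h : FacBound a B q) : 0 ≤ B := by
  have := h.2 0
  simp at this
  exact le_trans (abs_nonneg _) this

lemma FacBound.deriv_bound {a B q} (h : FacBound a B q) : FacBound (dcoef a) (B * q) q := by
  refine ⟨h.1, fun k => ?_⟩
  have h2 := h.2 (k + 1)
  have : |dcoef a k| = (k + 1) * |a (k + 1)| := by
    rw [dcoef, abs_mul, abs_of_nonneg (by positivity)]
  rw [this]
  have hk : ((k:ℝ) + 1) * (B * q ^ (k+1) / (Nat.factorial (k+1))) = B * q * q ^ k / Nat.factorial k := by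
    rw [Nat.factorial_succ, pow_succ]
    push_cast
    field_simp
  calc ((k:ℝ) + 1) * |a (k + 1)| ≤ ((k:ℝ)+1) * (B * q ^ (k+1) / (Nat.factorial (k+1))) := by
        apply mul_le_mul_of_nonneg_left h2 (by positivity)
    _ = B * q * q ^ k / Nat.factorial k := hk

lemma FacBound.summable {a B q} (h : FacBound a B q) (u : ℝ) :
    Summable (fun k => a k * u ^ k) := by
  apply Summable.of_norm_bounded (g := fun k => B * (q * |u|) ^ k / Nat.factorial k)
  · simpa [mul_div_assoc] using (Real.summable_pow_div_factorial (q * |u|)).mul_left B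
  · intro k
    rw [norm_eq_abs, abs_mul, abs_pow, mul_pow]
    calc |a k| * |u| ^ k ≤ B * q ^ k / Nat.factorial k * |u| ^ k :=
          mul_le_mul_of_nonneg_right (h.2 k) (by positivity)
      _ = B * (q ^ k * |u| ^ k) / Nat.factorial k := by ring

lemma FacBound.hasDerivAt {a B q} (h : FacBound a B q) (u : ℝ) :
    HasDerivAt (psum a) (psum (dcoef a) u) u := by
  set R : ℝ := |u| + 1 with hR
  have hR1 : (1:ℝ) ≤ R := by rw [hR]; linarith [abs_nonneg u]
  have hR0 : (0:ℝ) < R := by linarith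
  have hu : u ∈ Metric.ball (0:ℝ) R := by
    rw [Metric.mem_ball, Real.dist_eq, sub_zero, hR]; linarith
  -- derivative of each term
  have hderiv : ∀ (k : ℕ) (y : ℝ), y ∈ Metric.ball (0:ℝ) R →
      HasDerivAt (fun y => a k * y ^ k) (a k * (k * y ^ (k-1))) y := by
    intro k y _
    exact (hasDerivAt_pow k y).const_mul (a k)
  -- bound on the derivatives
  have hbound : ∀ (k : ℕ) (y : ℝ), y ∈ Metric.ball (0:ℝ) R →
      ‖a k * (k * y ^ (k-1))‖ ≤ B * (2 * q * R) ^ k / Nat.factorial k := by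
    intro k y hy
    have hyR : |y| ≤ R := by
      rw [Metric.mem_ball, Real.dist_eq, sub_zero] at hy; linarith
    have hy0 : (0:ℝ) ≤ |y| := abs_nonneg y
    have h1 : ‖a k * (k * y ^ (k-1))‖ = |a k| * (k * |y| ^ (k-1)) := by
      rw [norm_eq_abs, abs_mul, abs_mul, abs_pow, Nat.abs_cast]
    rw [h1]
    have h2 : (k:ℝ) * |y| ^ (k - 1) ≤ 2 ^ k * R ^ k := by
      have hk2 : (k:ℝ) ≤ 2 ^ k := by exact_mod_cast (Nat.lt_two_pow_self (n := k)).le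
      have hyk : |y| ^ (k-1) ≤ R ^ (k-1) := pow_le_pow_left₀ hy0 hyR _
      have hRk : R ^ (k-1) ≤ R ^ k := pow_le_pow_right₀ hR1 (Nat.sub_le k 1)
      exact mul_le_mul hk2 (le_trans hyk hRk) (by positivity) (by positivity)
    calc |a k| * ((k:ℝ) * |y| ^ (k-1)) ≤ (B * q ^ k / Nat.factorial k) * (2 ^ k * R ^ k) :=
          mul_le_mul (h.2 k) h2 (mul_nonneg (Nat.cast_nonneg k) (pow_nonneg (abs_nonneg y) _)) (by have hB := h.B_nonneg; have hq := h.1; positivity)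
      _ = B * (2 * q * R) ^ k / Nat.factorial k := by
          rw [mul_pow, mul_pow]; ring
  have hsum : Summable (fun k => B * (2 * q * R) ^ k / Nat.factorial k) := by
    simpa [mul_div_assoc] using (Real.summable_pow_div_factorial (2 * q * R)).mul_left B
  have key := hasDerivAt_tsum_of_isPreconnected hsum Metric.isOpen_ball
    (convex_ball (0:ℝ) R).isPreconnected
    hderiv hbound hu (h.summable u) hu
  -- now rewrite the derivative as psum (dcoef a) u
  refine key.congr_deriv ?_; symm
  rw [psum]
  -- ∑' k, dcoef a k * u ^ k = ∑' k, a k * (k * u ^ (k-1))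
  have hsum2 : Summable (fun k => a k * ((k:ℝ) * u ^ (k-1))) := by
    apply Summable.of_norm_bounded hsum
    intro k; exact hbound k u hu
  rw [hsum2.tsum_eq_zero_add]
  simp only [Nat.cast_zero, pow_zero, zero_mul, mul_zero, zero_add]
  apply tsum_congr
  intro k
  rw [dcoef]
  push_cast
  ring

lemma FacBound.kmul {a : ℕ → ℝ} {B q : ℝ} (h : FacBound a B q) :
    FacBound (fun k => 2 * k * a k) (2 * B) (2 * q) := by
  refine ⟨by linarith [h.1], fun k => ?_⟩
  have hq := h.1
  have hB := h.B_nonneg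
  have h1 : |2 * (k:ℝ) * a k| = 2 * k * |a k| := by
    rw [abs_mul, abs_of_nonneg (by positivity)]
  rw [h1]
  have hk2 : (k:ℝ) ≤ 2 ^ k := by exact_mod_cast (Nat.lt_two_pow_self (n := k)).le
  calc 2 * (k:ℝ) * |a k| ≤ 2 * 2 ^ k * (B * q ^ k / Nat.factorial k) := by
        apply mul_le_mul (by linarith) (h.2 k) (abs_nonneg _) (by positivity)
    _ = 2 * B * (2 * q) ^ k / Nat.factorial k := by
        rw [mul_pow]; ring

section Bessel

variable (b ζ : ℝ)

/-- coefficients of the auxiliary entire function -/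
noncomputable def qcoef (k : ℕ) : ℝ :=
  (ζ ^ 2 / 4) ^ k / (Nat.factorial k * Real.Gamma ((k : ℝ) + b + 1 / 2))

variable {b ζ}

lemma gamma_arg_pos (hb : 1 / 2 ≤ b) (k : ℕ) : (0:ℝ) < (k : ℝ) + b + 1 / 2 := by
  have : (0:ℝ) ≤ k := Nat.cast_nonneg k
  linarith

lemma gamma_pos (hb : 1 / 2 ≤ b) (k : ℕ) : 0 < Real.Gamma ((k : ℝ) + b + 1 / 2) :=
  Real.Gamma_pos_of_pos (gamma_arg_pos hb k)

lemma gamma_ge (hb : 1 / 2 ≤ b) (k : ℕ) :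
    Real.Gamma (b + 1 / 2) ≤ Real.Gamma ((k : ℝ) + b + 1 / 2) := by
  induction k with
  | zero => simp
  | succ n ih =>
    have harg := gamma_arg_pos hb n
    have hpos := gamma_pos hb n
    have hcast : ((n + 1 : ℕ) : ℝ) + b + 1 / 2 = ((n : ℝ) + b + 1 / 2) + 1 := by
      push_cast; ring
    rw [hcast, Real.Gamma_add_one (ne_of_gt harg)]
    have h1 : (1:ℝ) ≤ (n : ℝ) + b + 1 / 2 := by
      have : (0:ℝ) ≤ n := Nat.cast_nonneg n
      linarith
    nlinarith

lemma qcoef_facBound (hb : 1 / 2 ≤ b) (hζ : 0 < ζ) :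
    FacBound (qcoef b ζ) (1 / Real.Gamma (b + 1 / 2)) (ζ ^ 2 / 4) := by
  have hΓ : 0 < Real.Gamma (b + 1 / 2) := by
    have := gamma_pos hb 0; simpa using this
  refine ⟨by positivity, fun k => ?_⟩
  have hk := gamma_pos hb k
  have hge := gamma_ge hb k
  rw [qcoef, abs_of_nonneg (by positivity)]
  have h1 : (0:ℝ) < (Nat.factorial k : ℝ) := by positivity
  have h2 : (0:ℝ) ≤ (ζ^2/4)^k := by positivity
  rw [div_le_div_iff₀ (by positivity) (by positivity)]
  have key : (1:ℝ) ≤ 1 / Real.Gamma (b + 1/2) * Real.Gamma ((k:ℝ) + b + 1/2) := by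
    rw [div_mul_eq_mul_div, one_mul, le_div_iff₀ hΓ, one_mul]
    exact hge
  nlinarith [mul_le_mul_of_nonneg_left key (mul_nonneg h2 h1.le)]

/-- the coefficient recurrence giving the ODE -/
lemma qcoef_rec (hb : 1 / 2 ≤ b) (k : ℕ) :
    ζ ^ 2 / 2 * qcoef b ζ k
      = (2 * b + 1) * dcoef (qcoef b ζ) k + 2 * k * dcoef (qcoef b ζ) k := by
  have hΓ := gamma_pos hb k
  have harg := gamma_arg_pos hb k
  have hfac : (0:ℝ) < (Nat.factorial k : ℝ) := by positivity
  rw [dcoef, qcoef, qcoef]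
  have hcast : ((k + 1 : ℕ) : ℝ) + b + 1 / 2 = ((k : ℝ) + b + 1 / 2) + 1 := by push_cast; ring
  rw [hcast, Real.Gamma_add_one (ne_of_gt harg), Nat.factorial_succ]
  push_cast
  rw [pow_succ]
  field_simp
  ring

end Bessel

section Hfun

variable (b ζ : ℝ)

noncomputable def H0 : ℝ → ℝ := psum (qcoef b ζ)
noncomputable def H1 : ℝ → ℝ := psum (dcoef (qcoef b ζ))
noncomputable def H2 : ℝ → ℝ := psum (dcoef (dcoef (qcoef b ζ)))
noncomputable def H3 : ℝ → ℝ := psum (dcoef (dcoef (dcoef (qcoef b ζ))))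

variable {b ζ} (hb : 1 / 2 ≤ b) (hζ : 0 < ζ)
include hb hζ


lemma hasDerivAt_H0 (u : ℝ) : HasDerivAt (H0 b ζ) (H1 b ζ u) u :=
  (qcoef_facBound hb hζ).hasDerivAt u

lemma hasDerivAt_H1 (u : ℝ) : HasDerivAt (H1 b ζ) (H2 b ζ u) u :=
  (qcoef_facBound hb hζ).deriv_bound.hasDerivAt u

lemma hasDerivAt_H2 (u : ℝ) : HasDerivAt (H2 b ζ) (H3 b ζ u) u :=
  (qcoef_facBound hb hζ).deriv_bound.deriv_bound.hasDerivAt u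

lemma deriv_H0 : deriv (H0 b ζ) = H1 b ζ :=
  funext fun u => (hasDerivAt_H0 hb hζ u).deriv

lemma deriv_H1 : deriv (H1 b ζ) = H2 b ζ :=
  funext fun u => (hasDerivAt_H1 hb hζ u).deriv

lemma contDiff_H0 : ContDiff ℝ 2 (H0 b ζ) := by
  rw [show (2 : WithTop ℕ∞) = 1 + 1 from rfl, contDiff_succ_iff_deriv]
  refine ⟨fun u => (hasDerivAt_H0 hb hζ u).differentiableAt, by simp, ?_⟩
  rw [deriv_H0 hb hζ, contDiff_one_iff_deriv]
  refine ⟨fun u => (hasDerivAt_H1 hb hζ u).differentiableAt, ?_⟩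
  rw [deriv_H1 hb hζ]
  exact continuous_iff_continuousAt.2 fun u => (hasDerivAt_H2 hb hζ u).continuousAt

/-- the ODE satisfied by `H0`. -/
lemma H_ode (u : ℝ) :
    ζ ^ 2 / 2 * H0 b ζ u = (2 * b + 1) * H1 b ζ u + 2 * u * H2 b ζ u := by
  have fb0 := qcoef_facBound hb hζ
  have fb1 := fb0.deriv_bound
  have fb2 := fb1.deriv_bound
  have fbs := fb1.kmul
  -- LHS
  rw [H0, H1, H2, psum, psum, psum, ← tsum_mul_left]
  have hsplit : ∀ k : ℕ, ζ ^ 2 / 2 * (qcoef b ζ k * u ^ k)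
      = (2 * b + 1) * (dcoef (qcoef b ζ) k * u ^ k)
        + (2 * k * dcoef (qcoef b ζ) k) * u ^ k := by
    intro k
    have h := qcoef_rec (ζ := ζ) hb k
    linear_combination u ^ k * h
  rw [tsum_congr hsplit]
  rw [Summable.tsum_add (((fb1.summable u).mul_left _)) (by
    have := fbs.summable u
    simpa [mul_comm, mul_assoc, mul_left_comm] using this)]
  congr 1
  · rw [tsum_mul_left]
  · -- ∑' k, (2 k · dcoef c k) u^k = 2 u ∑' k, dcoef (dcoef c) k u^k
    have hs : Summable (fun k : ℕ => 2 * (k:ℝ) * dcoef (qcoef b ζ) k * u ^ k) := by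
      have := fbs.summable u
      simpa using this
    rw [hs.tsum_eq_zero_add]
    simp only [Nat.cast_zero, mul_zero, zero_mul, zero_add, pow_zero]
    rw [← tsum_mul_left]
    apply tsum_congr
    intro k
    simp only [dcoef]
    push_cast
    ring

end Hfun

section Kernel

variable {b ζ τ z : ℝ}

lemma kernel_const_eq (hζ : 0 < ζ) (hτ : 0 < τ) (hz : 0 < z) :
    Real.sqrt (z * ζ) / τ * (ζ / z) ^ b * (z * ζ / τ / 2) ^ (b - 1 / 2)
      = ζ ^ (2 * b) * 2 ^ ((1:ℝ) / 2 - b) * τ ^ (-(b + 1 / 2)) := by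
  have h1 : (0:ℝ) < Real.sqrt (z * ζ) / τ * (ζ / z) ^ b * (z * ζ / τ / 2) ^ (b - 1 / 2) := by
    positivity
  have h2 : (0:ℝ) < ζ ^ (2 * b) * 2 ^ ((1:ℝ) / 2 - b) * τ ^ (-(b + 1 / 2)) := by positivity
  have hzζ : (0:ℝ) < z * ζ := by positivity
  apply Real.log_injOn_pos (Set.mem_Ioi.mpr h1) (Set.mem_Ioi.mpr h2)
  have l1 : Real.log (Real.sqrt (z * ζ) / τ * (ζ / z) ^ b * (z * ζ / τ / 2) ^ (b - 1 / 2))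
      = 1 / 2 * (Real.log z + Real.log ζ) - Real.log τ
        + b * (Real.log ζ - Real.log z)
        + (b - 1 / 2) * (Real.log z + Real.log ζ - Real.log τ - Real.log 2) := by
    rw [Real.log_mul (by positivity) (by positivity),
      Real.log_mul (by positivity) (by positivity),
      Real.log_div (by positivity) (by positivity),
      Real.sqrt_eq_rpow, Real.log_rpow hzζ,
      Real.log_rpow (by positivity), Real.log_rpow (by positivity),
      Real.log_div (by positivity) (by positivity),
      Real.log_div (by positivity) (by positivity),
      Real.log_div (by positivity) (by positivity),
      Real.log_mul (by positivity) (by positivity)]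
    try ring
  have l2 : Real.log (ζ ^ (2 * b) * 2 ^ ((1:ℝ) / 2 - b) * τ ^ (-(b + 1 / 2)))
      = 2 * b * Real.log ζ + (1 / 2 - b) * Real.log 2 + (-(b + 1 / 2)) * Real.log τ := by
    rw [Real.log_mul (by positivity) (by positivity),
      Real.log_mul (by positivity) (by positivity),
      Real.log_rpow hζ, Real.log_rpow (by norm_num), Real.log_rpow hτ]
  rw [l1, l2]; try ring

lemma besselKernel_eq_H0 (hb : 1 / 2 ≤ b) (hζ : 0 < ζ) (hτ : 0 < τ) (hz : 0 < z) :
    besselKernel b τ z ζ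
      = ζ ^ (2 * b) * 2 ^ ((1:ℝ) / 2 - b)
        * (τ ^ (-(b + 1 / 2)) * Real.exp (-(z ^ 2 + ζ ^ 2) / (2 * τ)) * H0 b ζ (z ^ 2 / τ ^ 2)) := by
  have hp : (0:ℝ) < z * ζ / τ / 2 := by positivity
  rw [besselKernel, besselI, H0, psum, ← tsum_mul_left, ← tsum_mul_left, ← tsum_mul_left]
  apply tsum_congr
  intro k
  have hΓarg : (k:ℝ) + (b - 1 / 2) + 1 = (k:ℝ) + b + 1 / 2 := by ring
  rw [hΓarg, qcoef]
  have hsplit : (z * ζ / τ / 2) ^ (2 * (k:ℝ) + (b - 1 / 2))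
      = ((ζ ^ 2 / 4) ^ k * (z ^ 2 / τ ^ 2) ^ k) * (z * ζ / τ / 2) ^ (b - 1 / 2) := by
    rw [Real.rpow_add hp]
    congr 1
    have hc : (2 * (k:ℝ)) = ((2 * k : ℕ) : ℝ) := by push_cast; ring
    rw [hc, Real.rpow_natCast, pow_mul, ← mul_pow]
    congr 1
    field_simp
    ring
  rw [hsplit]
  have const := kernel_const_eq (b := b) hζ hτ hz
  have hΓ : (0:ℝ) < Real.Gamma ((k:ℝ) + b + 1 / 2) := gamma_pos hb k
  have hfac : (0:ℝ) < (Nat.factorial k : ℝ) := by positivity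
  linear_combination (Real.exp (-(z ^ 2 + ζ ^ 2) / (2 * τ)) * ((ζ ^ 2 / 4) ^ k * (z ^ 2 / τ ^ 2) ^ k)
    / ((Nat.factorial k : ℝ) * Real.Gamma ((k:ℝ) + b + 1 / 2))) * const

end Kernel

section Fsec

variable (b ζ : ℝ)

noncomputable def Fk (t w : ℝ) : ℝ :=
  t ^ (-(b + 1 / 2)) * Real.exp (-(w ^ 2 + ζ ^ 2) / (2 * t)) * H0 b ζ (w ^ 2 / t ^ 2)

noncomputable def Fz (t w : ℝ) : ℝ :=
  t ^ (-(b + 1 / 2)) * Real.exp (-(w ^ 2 + ζ ^ 2) / (2 * t)) *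
    (-(w / t) * H0 b ζ (w ^ 2 / t ^ 2) + 2 * w / t ^ 2 * H1 b ζ (w ^ 2 / t ^ 2))

noncomputable def Fzz (t w : ℝ) : ℝ :=
  t ^ (-(b + 1 / 2)) * Real.exp (-(w ^ 2 + ζ ^ 2) / (2 * t)) *
    ((w ^ 2 / t ^ 2 - 1 / t) * H0 b ζ (w ^ 2 / t ^ 2)
      + (2 / t ^ 2 - 4 * w ^ 2 / t ^ 3) * H1 b ζ (w ^ 2 / t ^ 2)
      + 4 * w ^ 2 / t ^ 4 * H2 b ζ (w ^ 2 / t ^ 2))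

noncomputable def Ft (t w : ℝ) : ℝ :=
  t ^ (-(b + 1 / 2)) * Real.exp (-(w ^ 2 + ζ ^ 2) / (2 * t)) *
    ((-(b + 1 / 2) / t + (w ^ 2 + ζ ^ 2) / (2 * t ^ 2)) * H0 b ζ (w ^ 2 / t ^ 2)
      - 2 * w ^ 2 / t ^ 3 * H1 b ζ (w ^ 2 / t ^ 2))

variable {b ζ} (hb : 1 / 2 ≤ b) (hζ : 0 < ζ)
include hb hζ

lemma hasDerivAt_Fk_z {t : ℝ} (ht : 0 < t) (w : ℝ) :
    HasDerivAt (fun w' => Fk b ζ t w') (Fz b ζ t w) w := by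
  have hE : HasDerivAt (fun w' : ℝ => Real.exp (-(w' ^ 2 + ζ ^ 2) / (2 * t)))
      (Real.exp (-(w ^ 2 + ζ ^ 2) / (2 * t)) * (-(w / t))) w := by
    have hinner : HasDerivAt (fun w' : ℝ => -(w' ^ 2 + ζ ^ 2) / (2 * t)) (-(w / t)) w := by
      have := (((hasDerivAt_pow 2 w).add_const (ζ ^ 2)).neg).div_const (2 * t)
      refine this.congr_deriv ?_; symm
      field_simp
      ring
    exact hinner.exp
  have hU : HasDerivAt (fun w' : ℝ => w' ^ 2 / t ^ 2) (2 * w / t ^ 2) w := by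
    have := (hasDerivAt_pow 2 w).div_const (t ^ 2)
    refine this.congr_deriv ?_; symm
    push_cast; ring
  have hH : HasDerivAt (fun w' : ℝ => H0 b ζ (w' ^ 2 / t ^ 2))
      (H1 b ζ (w ^ 2 / t ^ 2) * (2 * w / t ^ 2)) w :=
    (hasDerivAt_H0 hb hζ (w ^ 2 / t ^ 2)).comp w hU
  have := (hE.const_mul (t ^ (-(b + 1 / 2)))).mul hH
  refine this.congr_deriv ?_; symm
  rw [Fz]; ring

lemma hasDerivAt_Fz_z {t : ℝ} (ht : 0 < t) (w : ℝ) :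
    HasDerivAt (fun w' => Fz b ζ t w') (Fzz b ζ t w) w := by
  have hE : HasDerivAt (fun w' : ℝ => Real.exp (-(w' ^ 2 + ζ ^ 2) / (2 * t)))
      (Real.exp (-(w ^ 2 + ζ ^ 2) / (2 * t)) * (-(w / t))) w := by
    have hinner : HasDerivAt (fun w' : ℝ => -(w' ^ 2 + ζ ^ 2) / (2 * t)) (-(w / t)) w := by
      have := (((hasDerivAt_pow 2 w).add_const (ζ ^ 2)).neg).div_const (2 * t)
      refine this.congr_deriv ?_; symm
      field_simp
      ring
    exact hinner.exp
  have hU : HasDerivAt (fun w' : ℝ => w' ^ 2 / t ^ 2) (2 * w / t ^ 2) w := by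
    have := (hasDerivAt_pow 2 w).div_const (t ^ 2)
    refine this.congr_deriv ?_; symm
    push_cast; ring
  have hH0 : HasDerivAt (fun w' : ℝ => H0 b ζ (w' ^ 2 / t ^ 2))
      (H1 b ζ (w ^ 2 / t ^ 2) * (2 * w / t ^ 2)) w :=
    (hasDerivAt_H0 hb hζ (w ^ 2 / t ^ 2)).comp w hU
  have hH1 : HasDerivAt (fun w' : ℝ => H1 b ζ (w' ^ 2 / t ^ 2))
      (H2 b ζ (w ^ 2 / t ^ 2) * (2 * w / t ^ 2)) w :=
    (hasDerivAt_H1 hb hζ (w ^ 2 / t ^ 2)).comp w hU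
  have h1 : HasDerivAt (fun w' : ℝ => -(w' / t)) (-(1 / t)) w := by
    have := ((hasDerivAt_id w).div_const t).neg
    exact this
  have h2 : HasDerivAt (fun w' : ℝ => 2 * w' / t ^ 2) (2 / t ^ 2) w := by
    have := ((hasDerivAt_id w).const_mul 2).div_const (t ^ 2)
    refine this.congr_deriv ?_; symm
    ring
  have hP : HasDerivAt (fun w' : ℝ => -(w' / t) * H0 b ζ (w' ^ 2 / t ^ 2)
      + 2 * w' / t ^ 2 * H1 b ζ (w' ^ 2 / t ^ 2))
      (-(1 / t) * H0 b ζ (w ^ 2 / t ^ 2)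
        + -(w / t) * (H1 b ζ (w ^ 2 / t ^ 2) * (2 * w / t ^ 2))
        + (2 / t ^ 2 * H1 b ζ (w ^ 2 / t ^ 2)
          + 2 * w / t ^ 2 * (H2 b ζ (w ^ 2 / t ^ 2) * (2 * w / t ^ 2)))) w :=
    (h1.mul hH0).add (h2.mul hH1)
  have := (hE.const_mul (t ^ (-(b + 1 / 2)))).mul hP
  refine this.congr_deriv ?_; symm
  rw [Fzz]
  field_simp
  ring

lemma hasDerivAt_Fk_t {t w : ℝ} (ht : 0 < t) :
    HasDerivAt (fun t' => Fk b ζ t' w) (Ft b ζ t w) t := by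
  have hA : HasDerivAt (fun t' : ℝ => t' ^ (-(b + 1 / 2)))
      (-(b + 1 / 2) * t ^ (-(b + 1 / 2) - 1)) t :=
    Real.hasDerivAt_rpow_const (Or.inl (ne_of_gt ht))
  have hE : HasDerivAt (fun t' : ℝ => Real.exp (-(w ^ 2 + ζ ^ 2) / (2 * t')))
      (Real.exp (-(w ^ 2 + ζ ^ 2) / (2 * t)) *
        ((0 * (2 * t) - -(w ^ 2 + ζ ^ 2) * 2) / (2 * t) ^ 2)) t := by
    have hinner : HasDerivAt (fun t' : ℝ => -(w ^ 2 + ζ ^ 2) / (2 * t'))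
        ((0 * (2 * t) - -(w ^ 2 + ζ ^ 2) * 2) / (2 * t) ^ 2) t :=
      (hasDerivAt_const t (-(w ^ 2 + ζ ^ 2))).div
        (by simpa using (hasDerivAt_id t).const_mul 2) (by positivity)
    exact hinner.exp
  have hU : HasDerivAt (fun t' : ℝ => w ^ 2 / t' ^ 2)
      ((0 * t ^ 2 - w ^ 2 * (2 * t ^ 1)) / (t ^ 2) ^ 2) t :=
    (hasDerivAt_const t (w ^ 2)).div (hasDerivAt_pow 2 t) (by positivity)
  have hH : HasDerivAt (fun t' : ℝ => H0 b ζ (w ^ 2 / t' ^ 2))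
      (H1 b ζ (w ^ 2 / t ^ 2) * ((0 * t ^ 2 - w ^ 2 * (2 * t ^ 1)) / (t ^ 2) ^ 2)) t :=
    (hasDerivAt_H0 hb hζ (w ^ 2 / t ^ 2)).comp t hU
  have := (hA.mul hE).mul hH
  refine this.congr_deriv ?_; symm
  rw [Ft]
  have hpow : t ^ (-(b + 1 / 2) - 1) = t ^ (-(b + 1 / 2)) / t := by
    rw [Real.rpow_sub ht, Real.rpow_one]
  rw [hpow]
  simp only [Pi.mul_apply]
  field_simp
  ring

lemma contDiffAt_Fk_z {t : ℝ} (ht : 0 < t) (z : ℝ) :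
    ContDiffAt ℝ 2 (fun w' => Fk b ζ t w') z := by
  have hH0c : ContDiff ℝ 2 (H0 b ζ) := contDiff_H0 hb hζ
  have h1 : ContDiff ℝ 2 (fun w' : ℝ => -(w' ^ 2 + ζ ^ 2) / (2 * t)) :=
    (((contDiff_id.pow 2).add contDiff_const).neg).div_const (2 * t)
  have h2 : ContDiff ℝ 2 (fun w' : ℝ => w' ^ 2 / t ^ 2) :=
    (contDiff_id.pow 2).div_const (t ^ 2)
  exact (((contDiff_const.mul ((Real.contDiff_exp.of_le le_top).comp h1)).mul
    (hH0c.comp h2)).contDiffAt)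

lemma contDiffAt_Fk_t {τ w : ℝ} (hτ : 0 < τ) :
    ContDiffAt ℝ 1 (fun t' => Fk b ζ t' w) τ := by
  have hH0c : ContDiff ℝ 2 (H0 b ζ) := contDiff_H0 hb hζ
  have hA : ContDiffAt ℝ 1 (fun t' : ℝ => t' ^ (-(b + 1 / 2))) τ :=
    Real.contDiffAt_rpow_const_of_ne (ne_of_gt hτ)
  have hden : ContDiffAt ℝ 1 (fun t' : ℝ => 2 * t') τ := contDiffAt_const.mul contDiffAt_id
  have hE : ContDiffAt ℝ 1 (fun t' : ℝ => Real.exp (-(w ^ 2 + ζ ^ 2) / (2 * t'))) τ := by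
    refine ((Real.contDiff_exp.of_le le_top).contDiffAt).comp τ ?_
    exact contDiffAt_const.div hden (by positivity)
  have hU : ContDiffAt ℝ 1 (fun t' : ℝ => w ^ 2 / t' ^ 2) τ :=
    contDiffAt_const.div (contDiffAt_id.pow 2) (by positivity)
  have hH : ContDiffAt ℝ 1 (fun t' : ℝ => H0 b ζ (w ^ 2 / t' ^ 2)) τ :=
    ((hH0c.of_le one_le_two).contDiffAt).comp τ hU
  exact (hA.mul hE).mul hH

lemma F_pde {t z : ℝ} (ht : 0 < t) (hz : 0 < z) :
    Ft b ζ t z = 1 / 2 * Fzz b ζ t z + b / z * Fz b ζ t z := by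
  have ode := H_ode hb hζ (z ^ 2 / t ^ 2)
  rw [Ft, Fzz, Fz]
  have htne : t ≠ 0 := ne_of_gt ht
  have hzne : z ≠ 0 := ne_of_gt hz
  set A := t ^ (-(b + 1 / 2)) with hA
  set E := Real.exp (-(z ^ 2 + ζ ^ 2) / (2 * t)) with hE
  set X := H0 b ζ (z ^ 2 / t ^ 2) with hX
  set Y := H1 b ζ (z ^ 2 / t ^ 2) with hY
  set W := H2 b ζ (z ^ 2 / t ^ 2) with hW
  have hz' : b / z * (A * E * (-(z / t) * X + 2 * z / t ^ 2 * Y))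
      = A * E * (-(b / t) * X + 2 * b / t ^ 2 * Y) := by
    field_simp
  rw [hz']
  linear_combination (A * E / t ^ 2) * ode

end Fsec

/-- for `b ≥ 1/2` and fixed `ζ > 0`, the Bessel heat kernel
`G(τ,z) = q_τ(z,ζ,b)` is C¹ in `τ`, C² in `z` on `(0,∞)²` and solves the Bessel PDE
`∂G/∂τ = (1/2)∂²G/∂z² + (b/z)∂G/∂z`. -/
theorem besselKernel_solves_bessel_pde
    (b ζ : ℝ) (hb : 1 / 2 ≤ b) (hζ : 0 < ζ) :
    ∀ τ z : ℝ, 0 < τ → 0 < z →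
      ContDiffAt ℝ 1 (fun t => besselKernel b t z ζ) τ ∧
      ContDiffAt ℝ 2 (fun w => besselKernel b τ w ζ) z ∧
      deriv (fun t => besselKernel b t z ζ) τ
        = 1 / 2 * deriv (fun w => deriv (fun w' => besselKernel b τ w' ζ) w) z
          + b / z * deriv (fun w => besselKernel b τ w ζ) z := by
  intro τ z hτ hz
  set K : ℝ := ζ ^ (2 * b) * 2 ^ ((1:ℝ) / 2 - b) with hK
  have hEq_t : (fun t => besselKernel b t z ζ) =ᶠ[nhds τ] (fun t => K * Fk b ζ t z) := by
    filter_upwards [Ioi_mem_nhds hτ] with t ht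
    rw [besselKernel_eq_H0 hb hζ ht hz, hK]
    simp only [Fk]
  have hEq_z : (fun w => besselKernel b τ w ζ) =ᶠ[nhds z] (fun w => K * Fk b ζ τ w) := by
    filter_upwards [Ioi_mem_nhds hz] with w hw
    rw [besselKernel_eq_H0 hb hζ hτ hw, hK]
    simp only [Fk]
  refine ⟨?_, ?_, ?_⟩
  · exact (contDiffAt_const.mul (contDiffAt_Fk_t hb hζ hτ)).congr_of_eventuallyEq hEq_t
  · exact (contDiffAt_const.mul (contDiffAt_Fk_z hb hζ hτ z)).congr_of_eventuallyEq hEq_z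
  · have dT : deriv (fun t => besselKernel b t z ζ) τ = K * Ft b ζ τ z := by
      rw [hEq_t.deriv_eq]
      exact ((hasDerivAt_Fk_t hb hζ hτ).const_mul K).deriv
    have dZfun : ∀ w : ℝ, 0 < w →
        deriv (fun w' => besselKernel b τ w' ζ) w = K * Fz b ζ τ w := by
      intro w hw
      have hEq_w : (fun w' => besselKernel b τ w' ζ) =ᶠ[nhds w] (fun w' => K * Fk b ζ τ w') := by
        filter_upwards [Ioi_mem_nhds hw] with v hv
        rw [besselKernel_eq_H0 hb hζ hτ hv, hK]
        simp only [Fk]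
      rw [hEq_w.deriv_eq]
      exact ((hasDerivAt_Fk_z hb hζ hτ w).const_mul K).deriv
    have dZZ : deriv (fun w => deriv (fun w' => besselKernel b τ w' ζ) w) z
        = K * Fzz b ζ τ z := by
      have hEq_d : (fun w => deriv (fun w' => besselKernel b τ w' ζ) w)
          =ᶠ[nhds z] (fun w => K * Fz b ζ τ w) := by
        filter_upwards [Ioi_mem_nhds hz] with v hv
        exact dZfun v hv
      rw [hEq_d.deriv_eq]
      exact ((hasDerivAt_Fz_z hb hζ hτ z).const_mul K).deriv
    rw [dT, dZfun z hz, dZZ, F_pde hb hζ hτ hz]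
    ring
end

section
/- Let b ≥ 1/2, T̃ > 0, let y : [0,T̃] → (0,∞) be continuous and let Ψ : [0,T̃] → ℝ be continuous. With the Bessel heat kernel q_s(z,ζ,b) = (√(zζ)/s)·(ζ/z)^b·exp(−(z²+ζ²)/(2s))·I_{b−1/2}(zζ/s), fix τ ∈ (0,T̃] and define, for z > max_{k∈[0,τ]} y(k), the Bessel potential q(τ,z) = ∫_0^τ Ψ(k)·[∂q_{τ−k}(z,ζ,b)/∂ζ]|_{ζ=y(k)} dk. Then q(τ,z) → 0 as z → ∞. -/
set_option maxHeartbeats 2000000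

open Real Filter

namespace BesselAux

noncomputable def besselI' (ν x : ℝ) : ℝ :=
  ∑' k : ℕ, (2*(k:ℝ)+ν) * (x/2) ^ (2*(k:ℝ)+ν-1) / 2
    / ((Nat.factorial k : ℝ) * Real.Gamma ((k:ℝ)+ν+1))

variable {ν x : ℝ}

/-- `Γ(ν+1)·k! ≤ Γ(k+ν+1)` for `ν ≥ 0`. -/
lemma gamma_fact_le {ν : ℝ} (hν : 0 ≤ ν) (k : ℕ) :
    Real.Gamma (ν + 1) * (Nat.factorial k : ℝ) ≤ Real.Gamma ((k : ℝ) + ν + 1) := by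
  induction k with
  | zero => simp
  | succ k ih =>
    have hpos : (0:ℝ) < (k : ℝ) + ν + 1 := by positivity
    have h1 : ((k:ℕ)+1 : ℝ) + ν + 1 = ((k : ℝ) + ν + 1) + 1 := by push_cast; ring
    have h2 : Real.Gamma ((↑(k+1):ℝ) + ν + 1) = ((k:ℝ)+ν+1) * Real.Gamma ((k:ℝ)+ν+1) := by
      push_cast
      rw [show (k:ℝ) + 1 + ν + 1 = ((k:ℝ) + ν + 1) + 1 by ring, Real.Gamma_add_one (ne_of_gt hpos)]
    rw [h2]
    have hΓ : 0 ≤ Real.Gamma (ν+1) * (Nat.factorial k : ℝ) := by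
      have := Real.Gamma_pos_of_pos (show (0:ℝ) < ν + 1 by linarith)
      positivity
    calc Real.Gamma (ν + 1) * (Nat.factorial (k+1) : ℝ)
        = ((k:ℝ)+1) * (Real.Gamma (ν+1) * (Nat.factorial k : ℝ)) := by
          push_cast [Nat.factorial_succ]; ring
      _ ≤ ((k:ℝ)+ν+1) * (Real.Gamma (ν+1) * (Nat.factorial k : ℝ)) := by
          apply mul_le_mul_of_nonneg_right _ hΓ; linarith
      _ ≤ ((k:ℝ)+ν+1) * Real.Gamma ((k:ℝ)+ν+1) := by
          apply mul_le_mul_of_nonneg_left ih (le_of_lt hpos)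

/-- `(2k)! ≤ 4^k (k!)²`. -/
lemma two_fact_le (k : ℕ) : Nat.factorial (2*k) ≤ 4^k * (Nat.factorial k)^2 := by
  induction k with
  | zero => simp
  | succ k ih =>
    have h : 2*(k+1) = (2*k+1) + 1 := by ring
    rw [h, Nat.factorial_succ, Nat.factorial_succ]
    calc (2*k+1+1) * ((2*k+1) * Nat.factorial (2*k))
        ≤ (2*k+2) * ((2*k+2) * (4^k * (Nat.factorial k)^2)) := by
          apply Nat.mul_le_mul (by omega)
          exact Nat.mul_le_mul (by omega) ih
      _ ≤ 4^(k+1) * (Nat.factorial (k+1))^2 := by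
          rw [Nat.factorial_succ]; ring_nf; nlinarith [Nat.factorial_pos k]

/-- real version: `k!·Γ(k+ν+1) ≥ Γ(ν+1)·(2k)!/4^k`, stated as bound on the inverse. -/
lemma inv_cfac_le {ν : ℝ} (hν : 0 ≤ ν) (k : ℕ) :
    ((Nat.factorial k : ℝ) * Real.Gamma ((k:ℝ) + ν + 1))⁻¹
      ≤ (4:ℝ)^k / (Real.Gamma (ν+1) * (Nat.factorial (2*k) : ℝ)) := by
  have hΓν : 0 < Real.Gamma (ν + 1) := Real.Gamma_pos_of_pos (by linarith)
  have hΓk : 0 < Real.Gamma ((k:ℝ) + ν + 1) := Real.Gamma_pos_of_pos (by positivity)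
  have hf : (0:ℝ) < (Nat.factorial k : ℝ) := by exact_mod_cast Nat.factorial_pos k
  have h2f : (0:ℝ) < (Nat.factorial (2*k) : ℝ) := by exact_mod_cast Nat.factorial_pos (2*k)
  rw [div_eq_mul_inv, ← inv_inv ((4:ℝ)^k), ← mul_inv]
  apply inv_anti₀
  · positivity
  · -- (4^k)⁻¹ * (Γ(ν+1) * (2k)!) ≤ k! * Γ(k+ν+1)
    have h1 : Real.Gamma (ν+1) * (Nat.factorial (2*k) : ℝ)
        ≤ Real.Gamma (ν+1) * ((4:ℝ)^k * (Nat.factorial k : ℝ)^2) := by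
      apply mul_le_mul_of_nonneg_left _ (le_of_lt hΓν)
      exact_mod_cast two_fact_le k
    have h2 : (Nat.factorial k : ℝ) * (Real.Gamma (ν+1) * (Nat.factorial k : ℝ))
        ≤ (Nat.factorial k : ℝ) * Real.Gamma ((k:ℝ)+ν+1) :=
      mul_le_mul_of_nonneg_left (gamma_fact_le hν k) (le_of_lt hf)
    calc ((4:ℝ)^k)⁻¹ * (Real.Gamma (ν+1) * (Nat.factorial (2*k):ℝ))
        ≤ ((4:ℝ)^k)⁻¹ * (Real.Gamma (ν+1) * ((4:ℝ)^k * (Nat.factorial k : ℝ)^2)) := by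
          apply mul_le_mul_of_nonneg_left h1; positivity
      _ = (Nat.factorial k : ℝ) * (Real.Gamma (ν+1) * (Nat.factorial k : ℝ)) := by
          field_simp
      _ ≤ (Nat.factorial k : ℝ) * Real.Gamma ((k:ℝ)+ν+1) := h2

/-- `Σ_k w^(2k)/(2k)!` is summable. -/
lemma summable_sq_fact {w : ℝ} (hw : 0 ≤ w) :
    Summable (fun k : ℕ => w^(2*k) / (Nat.factorial (2*k) : ℝ)) := by
  apply Summable.of_nonneg_of_le (fun k => by positivity)
    (g := fun k : ℕ => w^(2*k)/(Nat.factorial (2*k):ℝ))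
    (f := fun k : ℕ => (w^2)^k/(Nat.factorial k : ℝ))
  · intro k
    rw [pow_mul]
    apply div_le_div_of_nonneg_left ?_ ?_ ?_
    · positivity
    · exact_mod_cast Nat.factorial_pos k
    · exact_mod_cast Nat.factorial_le (by omega)
  · exact Real.summable_pow_div_factorial (w^2)

/-- `Σ_k w^(2k)/(2k)! ≤ e^w` for `w ≥ 0`. -/
lemma tsum_sq_fact_le {w : ℝ} (hw : 0 ≤ w) :
    ∑' k : ℕ, w^(2*k) / (Nat.factorial (2*k) : ℝ) ≤ Real.exp w := by
  apply Real.tsum_le_of_sum_range_le (fun k => by positivity)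
  intro n
  calc ∑ k ∈ Finset.range n, w^(2*k)/(Nat.factorial (2*k) : ℝ)
      ≤ ∑ i ∈ Finset.range (2*n), w^i/(Nat.factorial i : ℝ) := by
        have : ∑ k ∈ Finset.range n, w^(2*k)/(Nat.factorial (2*k) : ℝ)
            = ∑ i ∈ (Finset.range n).image (fun k => 2*k), w^i/(Nat.factorial i : ℝ) := by
          rw [Finset.sum_image]; intro a _ b _ h; simp only at h; omega
        rw [this]
        apply Finset.sum_le_sum_of_subset_of_nonneg
        · intro i hi
          simp only [Finset.mem_image, Finset.mem_range] at hi ⊢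
          obtain ⟨k, hk, rfl⟩ := hi; omega
        · intro i _ _; positivity
    _ ≤ Real.exp w := Real.sum_le_exp_of_nonneg hw (2*n)

/-- `u^E ≤ E!·e^u` for `u ≥ 0`. -/
lemma pow_le_fact_mul_exp {u : ℝ} (hu : 0 ≤ u) (E : ℕ) :
    u^E ≤ (Nat.factorial E : ℝ) * Real.exp u := by
  have h : u^E / (Nat.factorial E : ℝ) ≤ Real.exp u := by
    calc u^E / (Nat.factorial E : ℝ)
        ≤ ∑ i ∈ Finset.range (E+1), u^i/(Nat.factorial i : ℝ) := by
          apply Finset.single_le_sum (f := fun i => u^i/(Nat.factorial i : ℝ))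
            (fun i _ => by positivity) (Finset.self_mem_range_succ E)
      _ ≤ Real.exp u := Real.sum_le_exp_of_nonneg hu _
  have hE : (0:ℝ) < (Nat.factorial E : ℝ) := by exact_mod_cast Nat.factorial_pos E
  calc u^E = u^E / (Nat.factorial E : ℝ) * (Nat.factorial E : ℝ) := by field_simp
    _ ≤ Real.exp u * (Nat.factorial E : ℝ) := by
        apply mul_le_mul_of_nonneg_right h (le_of_lt hE)
    _ = (Nat.factorial E : ℝ) * Real.exp u := by ring

/-- `2k+ν ≤ (ν+2)·2^k`. -/
lemma lin_le_exp2 {ν : ℝ} (hν : 0 ≤ ν) (k : ℕ) : 2*(k:ℝ) + ν ≤ (ν+2) * 2^k := by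
  have h1 : (k:ℝ) ≤ 2^k := by exact_mod_cast Nat.le_of_lt ((Nat.lt_two_pow_self (n := k)))
  have h2 : (1:ℝ) ≤ 2^k := one_le_pow₀ (by norm_num)
  nlinarith


lemma cfac_pos (hν : 0 ≤ ν) (k : ℕ) :
    (0:ℝ) < (Nat.factorial k : ℝ) * Real.Gamma ((k:ℝ) + ν + 1) := by
  have h1 : (0:ℝ) < (Nat.factorial k : ℝ) := by exact_mod_cast Nat.factorial_pos k
  have h2 := Real.Gamma_pos_of_pos (show (0:ℝ) < (k:ℝ)+ν+1 by positivity)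
  positivity

lemma pow_half_four (x : ℝ) (k : ℕ) : ((x/2):ℝ)^(2*k) * 4^k = x^(2*k) := by
  rw [show (4:ℝ)^k = 2^(2*k) by rw [pow_mul]; norm_num, ← mul_pow]; norm_num

lemma rpow_split (hx : 0 < x) (a : ℝ) (k : ℕ) :
    (x/2) ^ (2*(k:ℝ) + a) = (x/2)^a * (x/2)^(2*k) := by
  have h2 : (0:ℝ) < x/2 := by linarith
  rw [show 2*(k:ℝ) + a = a + ((2*k : ℕ) : ℝ) by push_cast; ring,
    Real.rpow_add h2, Real.rpow_natCast]

lemma besselI_term_nonneg (hν : 0 ≤ ν) (hx : 0 ≤ x) (k : ℕ) :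
    0 ≤ (x/2) ^ (2*(k:ℝ)+ν) / ((Nat.factorial k : ℝ) * Real.Gamma ((k:ℝ)+ν+1)) := by
  have h1 : (0:ℝ) < (Nat.factorial k : ℝ) := by exact_mod_cast Nat.factorial_pos k
  have h2 := Real.Gamma_pos_of_pos (show (0:ℝ) < (k:ℝ)+ν+1 by positivity)
  have h3 : (0:ℝ) ≤ (x/2) ^ (2*(k:ℝ)+ν) := Real.rpow_nonneg (by linarith) _
  positivity

lemma besselD_term_nonneg (hν : 0 ≤ ν) (hx : 0 ≤ x) (k : ℕ) :
    0 ≤ (2*(k:ℝ)+ν) * (x/2) ^ (2*(k:ℝ)+ν-1) / 2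
        / ((Nat.factorial k : ℝ) * Real.Gamma ((k:ℝ)+ν+1)) := by
  have h1 : (0:ℝ) < (Nat.factorial k : ℝ) := by exact_mod_cast Nat.factorial_pos k
  have h2 := Real.Gamma_pos_of_pos (show (0:ℝ) < (k:ℝ)+ν+1 by positivity)
  have h3 : (0:ℝ) ≤ (x/2) ^ (2*(k:ℝ)+ν-1) := Real.rpow_nonneg (by linarith) _
  have h4 : (0:ℝ) ≤ 2*(k:ℝ)+ν := by positivity
  positivity

lemma besselI_term_le (hν : 0 ≤ ν) (hx : 0 < x) (k : ℕ) :
    (x/2) ^ (2*(k:ℝ)+ν) / ((Nat.factorial k : ℝ) * Real.Gamma ((k:ℝ)+ν+1))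
      ≤ ((x/2)^ν / Real.Gamma (ν+1)) * (x^(2*k) / (Nat.factorial (2*k) : ℝ)) := by
  have hΓν : 0 < Real.Gamma (ν + 1) := Real.Gamma_pos_of_pos (by linarith)
  have h2f : (0:ℝ) < (Nat.factorial (2*k) : ℝ) := by exact_mod_cast Nat.factorial_pos (2*k)
  have hnum : (0:ℝ) ≤ (x/2) ^ (2*(k:ℝ)+ν) := Real.rpow_nonneg (by linarith) _
  rw [div_eq_mul_inv]
  calc (x/2) ^ (2*(k:ℝ)+ν) * ((Nat.factorial k : ℝ) * Real.Gamma ((k:ℝ)+ν+1))⁻¹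
      ≤ (x/2) ^ (2*(k:ℝ)+ν) * ((4:ℝ)^k / (Real.Gamma (ν+1) * (Nat.factorial (2*k) : ℝ))) :=
        mul_le_mul_of_nonneg_left (inv_cfac_le hν k) hnum
    _ = ((x/2)^ν / Real.Gamma (ν+1)) * (((x/2)^(2*k) * 4^k) / (Nat.factorial (2*k) : ℝ)) := by
        rw [rpow_split hx ν k]; ring
    _ = ((x/2)^ν / Real.Gamma (ν+1)) * (x^(2*k) / (Nat.factorial (2*k) : ℝ)) := by
        rw [pow_half_four]
  
lemma besselD_term_le (hν : 0 ≤ ν) (hx : 0 < x) (k : ℕ) :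
    (2*(k:ℝ)+ν) * (x/2) ^ (2*(k:ℝ)+ν-1) / 2
        / ((Nat.factorial k : ℝ) * Real.Gamma ((k:ℝ)+ν+1))
      ≤ ((ν+2) * (x/2)^(ν-1) / Real.Gamma (ν+1))
          * ((Real.sqrt 2 * x)^(2*k) / (Nat.factorial (2*k) : ℝ)) := by
  have hΓν : 0 < Real.Gamma (ν + 1) := Real.Gamma_pos_of_pos (by linarith)
  have h2f : (0:ℝ) < (Nat.factorial (2*k) : ℝ) := by exact_mod_cast Nat.factorial_pos (2*k)
  have hr : (0:ℝ) ≤ (x/2) ^ (2*(k:ℝ)+ν-1) := Real.rpow_nonneg (by linarith) _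
  have hlin : (0:ℝ) ≤ 2*(k:ℝ)+ν := by positivity
  rw [div_div, div_eq_mul_inv]
  have step1 : (2*(k:ℝ)+ν) * (x/2) ^ (2*(k:ℝ)+ν-1) *
        (2 * ((Nat.factorial k : ℝ) * Real.Gamma ((k:ℝ)+ν+1)))⁻¹
      ≤ ((ν+2) * 2^k) * (x/2) ^ (2*(k:ℝ)+ν-1)
          * ((4:ℝ)^k / (Real.Gamma (ν+1) * (Nat.factorial (2*k) : ℝ))) := by
    apply mul_le_mul
    · exact mul_le_mul_of_nonneg_right (lin_le_exp2 hν k) hr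
    · rw [mul_inv]
      calc (2:ℝ)⁻¹ * ((Nat.factorial k : ℝ) * Real.Gamma ((k:ℝ)+ν+1))⁻¹
          ≤ 1 * ((Nat.factorial k : ℝ) * Real.Gamma ((k:ℝ)+ν+1))⁻¹ := by
            apply mul_le_mul_of_nonneg_right (by norm_num)
            exact inv_nonneg.2 (le_of_lt (cfac_pos hν k))
        _ = ((Nat.factorial k : ℝ) * Real.Gamma ((k:ℝ)+ν+1))⁻¹ := one_mul _
        _ ≤ _ := inv_cfac_le hν k
    · positivity
    · have : (0:ℝ) ≤ (ν+2) * 2^k := by positivity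
      positivity
  refine step1.trans (le_of_eq ?_)
  rw [show 2*(k:ℝ)+ν-1 = 2*(k:ℝ)+(ν-1) by ring, rpow_split hx (ν-1) k]
  have hsq : (Real.sqrt 2 * x)^(2*k) = 2^k * x^(2*k) := by
    rw [mul_pow, pow_mul, Real.sq_sqrt (by norm_num : (0:ℝ) ≤ 2)]
  rw [hsq]
  rw [← pow_half_four x k]
  ring


-- real work
lemma inv_cfac_le_fact (hν : 0 ≤ ν) (k : ℕ) :
    ((Nat.factorial k : ℝ) * Real.Gamma ((k:ℝ) + ν + 1))⁻¹
      ≤ (Real.Gamma (ν+1) * (Nat.factorial k : ℝ))⁻¹ := by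
  apply inv_anti₀
  · have := Real.Gamma_pos_of_pos (show (0:ℝ) < ν+1 by linarith)
    have h1 : (0:ℝ) < (Nat.factorial k : ℝ) := by exact_mod_cast Nat.factorial_pos k
    positivity
  · calc Real.Gamma (ν+1) * (Nat.factorial k : ℝ)
        ≤ Real.Gamma ((k:ℝ)+ν+1) := gamma_fact_le hν k
      _ ≤ (Nat.factorial k : ℝ) * Real.Gamma ((k:ℝ)+ν+1) := by
          have h2 := Real.Gamma_pos_of_pos (show (0:ℝ) < (k:ℝ)+ν+1 by positivity)
          have h1 : (1:ℝ) ≤ (Nat.factorial k : ℝ) := by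
            exact_mod_cast Nat.one_le_iff_ne_zero.mpr (Nat.factorial_ne_zero k)
          nlinarith

lemma summable_besselI (hν : 0 ≤ ν) (hx : 0 < x) :
    Summable (fun k : ℕ =>
      (x/2) ^ (2*(k:ℝ)+ν) / ((Nat.factorial k : ℝ) * Real.Gamma ((k:ℝ)+ν+1))) := by
  apply Summable.of_nonneg_of_le (besselI_term_nonneg hν hx.le) (besselI_term_le hν hx)
  exact (summable_sq_fact hx.le).mul_left _

lemma summable_besselD (hν : 0 ≤ ν) (hx : 0 < x) :
    Summable (fun k : ℕ =>
      (2*(k:ℝ)+ν) * (x/2) ^ (2*(k:ℝ)+ν-1) / 2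
        / ((Nat.factorial k : ℝ) * Real.Gamma ((k:ℝ)+ν+1))) := by
  apply Summable.of_nonneg_of_le (besselD_term_nonneg hν hx.le) (besselD_term_le hν hx)
  apply Summable.mul_left
  exact summable_sq_fact (by positivity)

lemma besselI_nonneg (hν : 0 ≤ ν) (hx : 0 ≤ x) : 0 ≤ besselI ν x :=
  tsum_nonneg (besselI_term_nonneg hν hx)

lemma besselI'_nonneg (hν : 0 ≤ ν) (hx : 0 ≤ x) : 0 ≤ besselI' ν x :=
  tsum_nonneg (besselD_term_nonneg hν hx)

lemma besselI_le_exp (hν : 0 ≤ ν) (hx : 0 < x) :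
    besselI ν x ≤ (x/2)^ν / Real.Gamma (ν+1) * Real.exp x := by
  have h1 : besselI ν x ≤ ∑' k : ℕ,
      ((x/2)^ν / Real.Gamma (ν+1)) * (x^(2*k) / (Nat.factorial (2*k) : ℝ)) :=
    Summable.tsum_le_tsum (besselI_term_le hν hx) (summable_besselI hν hx)
      ((summable_sq_fact hx.le).mul_left _)
  rw [tsum_mul_left] at h1
  refine h1.trans ?_
  apply mul_le_mul_of_nonneg_left (tsum_sq_fact_le hx.le)
  have := Real.Gamma_pos_of_pos (show (0:ℝ) < ν+1 by linarith)
  positivity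

lemma besselI'_le_exp (hν : 0 ≤ ν) (hx : 0 < x) :
    besselI' ν x ≤ (ν+2) * (x/2)^(ν-1) / Real.Gamma (ν+1) * Real.exp (Real.sqrt 2 * x) := by
  have h1 : besselI' ν x ≤ ∑' k : ℕ,
      ((ν+2) * (x/2)^(ν-1) / Real.Gamma (ν+1))
        * ((Real.sqrt 2 * x)^(2*k) / (Nat.factorial (2*k) : ℝ)) :=
    Summable.tsum_le_tsum (besselD_term_le hν hx) (summable_besselD hν hx)
      ((summable_sq_fact (by positivity)).mul_left _)
  rw [tsum_mul_left] at h1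
  refine h1.trans ?_
  apply mul_le_mul_of_nonneg_left (tsum_sq_fact_le (by positivity))
  have := Real.Gamma_pos_of_pos (show (0:ℝ) < ν+1 by linarith)
  have h2 : (0:ℝ) ≤ (x/2)^(ν-1) := Real.rpow_nonneg (by linarith) _
  positivity

lemma sqrt_two_le_two : Real.sqrt 2 ≤ 2 := by
  have h4 : Real.sqrt 4 = 2 := by
    rw [show (4:ℝ) = 2^2 by norm_num, Real.sqrt_sq (by norm_num : (0:ℝ) ≤ 2)]
  calc Real.sqrt 2 ≤ Real.sqrt 4 := Real.sqrt_le_sqrt (by norm_num)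
    _ = 2 := h4

/-- unified bound for `x ≥ 2`. -/
lemma besselI_bound (hν : 0 ≤ ν) (hx : 2 ≤ x) :
    besselI ν x ≤ (ν+2) / Real.Gamma (ν+1) * ((x/2)^(ν+1) * Real.exp (2*x)) := by
  have hΓ := Real.Gamma_pos_of_pos (show (0:ℝ) < ν+1 by linarith)
  have hxp : (0:ℝ) < x := by linarith
  have h1 : (1:ℝ) ≤ x/2 := by linarith
  refine (besselI_le_exp hν hxp).trans ?_
  have hr : (x/2)^ν ≤ (x/2)^(ν+1) := Real.rpow_le_rpow_of_exponent_le h1 (by linarith)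
  have he : Real.exp x ≤ Real.exp (2*x) := Real.exp_le_exp.2 (by linarith)
  have hrn1 : (0:ℝ) ≤ (x/2)^(ν+1) := Real.rpow_nonneg (by linarith) _
  calc (x/2)^ν / Real.Gamma (ν+1) * Real.exp x
      ≤ (x/2)^(ν+1) / Real.Gamma (ν+1) * Real.exp (2*x) := by gcongr
    _ = 1 / Real.Gamma (ν+1) * ((x/2)^(ν+1) * Real.exp (2*x)) := by ring
    _ ≤ (ν+2) / Real.Gamma (ν+1) * ((x/2)^(ν+1) * Real.exp (2*x)) := by
        gcongr <;> first | positivity | linarith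

lemma besselI'_bound (hν : 0 ≤ ν) (hx : 2 ≤ x) :
    besselI' ν x ≤ (ν+2) / Real.Gamma (ν+1) * ((x/2)^(ν+1) * Real.exp (2*x)) := by
  have hΓ := Real.Gamma_pos_of_pos (show (0:ℝ) < ν+1 by linarith)
  have hxp : (0:ℝ) < x := by linarith
  have h1 : (1:ℝ) ≤ x/2 := by linarith
  refine (besselI'_le_exp hν hxp).trans ?_
  have hr : (x/2)^(ν-1) ≤ (x/2)^(ν+1) := Real.rpow_le_rpow_of_exponent_le h1 (by linarith)
  have he : Real.exp (Real.sqrt 2 * x) ≤ Real.exp (2*x) := by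
    apply Real.exp_le_exp.2
    apply mul_le_mul_of_nonneg_right sqrt_two_le_two (by linarith)
  calc (ν+2) * (x/2)^(ν-1) / Real.Gamma (ν+1) * Real.exp (Real.sqrt 2 * x)
      ≤ (ν+2) * (x/2)^(ν+1) / Real.Gamma (ν+1) * Real.exp (2*x) := by
        gcongr <;> first | positivity | linarith
    _ = (ν+2) / Real.Gamma (ν+1) * ((x/2)^(ν+1) * Real.exp (2*x)) := by ring

lemma rpow_le_max {a c e t : ℝ} (ha : 0 < a) (h1 : a ≤ t) (h2 : t ≤ c) :
    t^e ≤ max (a^e) (c^e) := by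
  rcases le_or_gt 0 e with he|he
  · exact le_max_of_le_right (Real.rpow_le_rpow (le_trans ha.le h1) h2 he)
  · exact le_max_of_le_left (Real.rpow_le_rpow_of_nonpos ha h1 he.le)

/-- `besselI ν` is differentiable on `(0,∞)` with derivative `besselI' ν`. -/
lemma besselI_hasDerivAt (hν : 0 ≤ ν) (hx : 0 < x) :
    HasDerivAt (besselI ν) (besselI' ν x) x := by
  set C₀ : ℝ := max ((x/4)^(ν-1)) (x^(ν-1)) with hC₀
  have hC₀nn : 0 ≤ C₀ := le_trans (Real.rpow_nonneg (by linarith) _) (le_max_right _ _)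
  set c : ℕ → ℝ := fun k => (Nat.factorial k : ℝ) * Real.Gamma ((k:ℝ)+ν+1) with hc
  set g : ℕ → ℝ → ℝ := fun k ζ => (ζ/2) ^ (2*(k:ℝ)+ν) / c k with hg
  set g' : ℕ → ℝ → ℝ := fun k ζ => (2*(k:ℝ)+ν) * (ζ/2) ^ (2*(k:ℝ)+ν-1) / 2 / c k with hg'
  set u : ℕ → ℝ := fun k => (2*(k:ℝ)+ν) * (C₀ * x^(2*k)) / 2 / c k with hu
  have hxt : x ∈ Set.Ioo (x/2) (2*x) := ⟨by linarith, by linarith⟩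
  have key : HasDerivAt (fun z => ∑' k : ℕ, g k z) (∑' k : ℕ, g' k x) x := by
    apply hasDerivAt_tsum_of_isPreconnected (u := u) ?_ isOpen_Ioo isPreconnected_Ioo
      ?_ ?_ hxt ?_ hxt
    · -- Summable u
      have hb : ∀ k : ℕ, u k ≤ ((ν+2) * C₀ / (2 * Real.Gamma (ν+1))) * ((2*x^2)^k / (Nat.factorial k : ℝ)) := by
        intro k
        have hck := cfac_pos hν k
        have hfk : (0:ℝ) < (Nat.factorial k : ℝ) := by exact_mod_cast Nat.factorial_pos k
        have hΓ := Real.Gamma_pos_of_pos (show (0:ℝ) < ν+1 by linarith)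
        have h1 : u k ≤ ((ν+2) * 2^k) * (C₀ * x^(2*k)) / 2 * (Real.Gamma (ν+1) * (Nat.factorial k : ℝ))⁻¹ := by
          rw [hu]
          simp only
          rw [div_div, div_eq_mul_inv, div_eq_mul_inv, mul_inv, ← mul_assoc]
          apply mul_le_mul
          · apply mul_le_mul_of_nonneg_right _ (by positivity)
            apply mul_le_mul_of_nonneg_right (lin_le_exp2 hν k) (by positivity)
          · exact inv_cfac_le_fact hν k
          · positivity
          · have : (0:ℝ) ≤ (ν+2)*2^k := by positivity
            positivity
        refine h1.trans (le_of_eq ?_)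
        have h2 : (2:ℝ)^k * x^(2*k) = (2*x^2)^k := by rw [mul_pow, pow_mul]
        rw [← h2]
        field_simp
      apply Summable.of_nonneg_of_le _ hb ((Real.summable_pow_div_factorial (2*x^2)).mul_left _)
      · intro k
        have hck := cfac_pos hν k
        have h4 : (0:ℝ) ≤ 2*(k:ℝ)+ν := by positivity
        rw [hu]; simp only; positivity
    · -- HasDerivAt for each term
      intro k ζ hζ
      have hζpos : (0:ℝ) < ζ := lt_trans (by linarith : (0:ℝ) < x/2) hζ.1
      have hζ2 : (0:ℝ) < ζ/2 := by linarith
      have hid : HasDerivAt (fun w : ℝ => w/2) (1/2) ζ := (hasDerivAt_id ζ).div_const 2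
      have hrp := Real.hasDerivAt_rpow_const (x := ζ/2) (p := 2*(k:ℝ)+ν)
        (Or.inl (ne_of_gt hζ2))
      have hcomp := HasDerivAt.comp ζ hrp hid
      have hfin := hcomp.div_const (c k)
      exact hfin.congr_deriv (by simp only [hg']; ring)
    · -- bound on g'
      intro k ζ hζ
      have hζpos : (0:ℝ) < ζ := lt_trans (by linarith : (0:ℝ) < x/2) hζ.1
      have hck := cfac_pos hν k
      rw [Real.norm_eq_abs, abs_of_nonneg]
      swap
      · exact besselD_term_nonneg hν hζpos.le k
      have hsplit : (ζ/2)^(2*(k:ℝ)+ν-1) = (ζ/2)^(ν-1) * (ζ/2)^(2*k) := by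
        rw [show 2*(k:ℝ)+ν-1 = 2*(k:ℝ)+(ν-1) by ring]
        exact rpow_split hζpos (ν-1) k
      have h1 : (ζ/2)^(ν-1) ≤ C₀ := by
        apply rpow_le_max (a := x/4) (by linarith) (by have := hζ.1; linarith)
        have := hζ.2; linarith
      have h2 : (ζ/2)^(2*k) ≤ x^(2*k) := by
        apply pow_le_pow_left₀ (by linarith)
        have := hζ.2; linarith
      simp only [hg', hu]
      rw [hsplit]
      gcongr
      all_goals first
        | positivity
        | exact h1
        | exact h2
        | exact mul_le_mul h1 h2 (by positivity) hC₀nn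
    · exact summable_besselI hν hx
  exact key


/-- Derivative of the Bessel kernel in `ζ`. -/
lemma kernel_hasDerivAt {b s z ζ : ℝ} (hν : 0 ≤ b - 1/2) (hs : 0 < s) (hz : 0 < z)
    (hζ : 0 < ζ) :
    HasDerivAt (fun w => besselKernel b s z w)
      (((z / (2 * Real.sqrt (z*ζ)) / s * (ζ/z)^b
          + Real.sqrt (z*ζ) / s * (b * (ζ/z)^(b-1) / z)) * Real.exp (-(z^2+ζ^2)/(2*s))
        + Real.sqrt (z*ζ) / s * (ζ/z)^b * (Real.exp (-(z^2+ζ^2)/(2*s)) * (-(ζ/s))))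
          * besselI (b-1/2) (z*ζ/s)
       + Real.sqrt (z*ζ) / s * (ζ/z)^b * Real.exp (-(z^2+ζ^2)/(2*s))
          * (besselI' (b-1/2) (z*ζ/s) * (z/s))) ζ := by
  have hzζ : 0 < z * ζ := mul_pos hz hζ
  have h1 : HasDerivAt (fun w => Real.sqrt (z*w) / s) (z / (2 * Real.sqrt (z*ζ)) / s) ζ := by
    have hin : HasDerivAt (fun w : ℝ => z*w) z ζ := by
      simpa using (hasDerivAt_id ζ).const_mul z
    have hout := Real.hasDerivAt_sqrt (ne_of_gt hzζ)
    have := (hout.comp ζ hin).div_const s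
    exact this.congr_deriv (by field_simp)
  have h2 : HasDerivAt (fun w => (w/z)^b) (b * (ζ/z)^(b-1) / z) ζ := by
    have hin : HasDerivAt (fun w : ℝ => w/z) (1/z) ζ := by
      simpa using (hasDerivAt_id ζ).div_const z
    have hout := Real.hasDerivAt_rpow_const (x := ζ/z) (p := b)
      (Or.inl (ne_of_gt (div_pos hζ hz)))
    have := hout.comp ζ hin
    exact this.congr_deriv (by field_simp)
  have h3 : HasDerivAt (fun w => Real.exp (-(z^2+w^2)/(2*s)))
      (Real.exp (-(z^2+ζ^2)/(2*s)) * (-(ζ/s))) ζ := by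
    have hin : HasDerivAt (fun w : ℝ => -(z^2+w^2)/(2*s)) (-(ζ/s)) ζ := by
      have hp : HasDerivAt (fun w : ℝ => w^2) (2*ζ) ζ := by
        simpa using hasDerivAt_pow 2 ζ
      have := ((hp.const_add (z^2)).neg).div_const (2*s)
      exact this.congr_deriv (by field_simp)
    exact hin.exp
  have h4 : HasDerivAt (fun w => besselI (b-1/2) (z*w/s)) (besselI' (b-1/2) (z*ζ/s) * (z/s)) ζ := by
    have hin : HasDerivAt (fun w : ℝ => z*w/s) (z/s) ζ := by
      simpa using ((hasDerivAt_id ζ).const_mul z).div_const s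
    have hout := besselI_hasDerivAt hν (show (0:ℝ) < z*ζ/s from div_pos hzζ hs)
    exact hout.comp ζ hin
  have := ((h1.mul h2).mul h3).mul h4
  convert this using 2
  all_goals rfl


lemma rpow_le_pow_nat {w p : ℝ} {n : ℕ} (hw : 1 ≤ w) (hpn : p ≤ n) : w^p ≤ w^n := by
  calc w^p ≤ w^((n:ℝ)) := Real.rpow_le_rpow_of_exponent_le hw hpn
    _ = w^n := Real.rpow_natCast w n

/-- Master bound on the `ζ`-derivative of the Bessel kernel. -/
lemma kernel_deriv_bound (b S m M : ℝ) (hb : 1/2 ≤ b) (hm : 0 < m) (hmM : m ≤ M)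
    (hS : 0 < S) :
    ∃ C : ℝ, 0 ≤ C ∧ ∀ z s ζ, 8*M + 2*S/m + 8*S + 9 ≤ z → 0 < s → s ≤ S →
      m ≤ ζ → ζ ≤ M →
      |deriv (fun w => besselKernel b s z w) ζ|
        ≤ C * z^(⌈b - 1/2⌉₊ + 3) * Real.exp (-z) := by
  have hν : (0:ℝ) ≤ b - 1/2 := by linarith
  have hb0 : (0:ℝ) ≤ b := by linarith
  have hM0 : (0:ℝ) < M := lt_of_lt_of_le hm hmM
  set n : ℕ := ⌈b - 1/2⌉₊ + 1 with hn_def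
  have hΓ : 0 < Real.Gamma ((b-1/2)+1) := Real.Gamma_pos_of_pos (by linarith)
  have hsm : 0 < Real.sqrt m := Real.sqrt_pos.2 hm
  set Cb : ℝ := ((b-1/2)+2) / Real.Gamma ((b-1/2)+1) with hCb_def
  have hCb : 0 ≤ Cb := by positivity
  set c₀ : ℝ := 1/(2*Real.sqrt m) + (M+1)*(b*(1+1/m)) + (M+1)*M + (M+1) with hc₀_def
  have hc₀ : 0 ≤ c₀ := by positivity
  refine ⟨c₀ * Cb * (M+1)^n * (1+S)^(n+2) * (Nat.factorial (n+2) : ℝ), by positivity, ?_⟩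
  intro z s ζ hzZ hs hsS hmζ hζM
  have hSm : 0 < 2*S/m := by positivity
  have hz1 : (1:ℝ) ≤ z := by linarith
  have hz0 : (0:ℝ) < z := by linarith
  have hζ0 : (0:ℝ) < ζ := lt_of_lt_of_le hm hmζ
  have hζz : ζ ≤ z := by linarith
  have hz8M : 8*M ≤ z := by linarith
  have hz8S : 8*S ≤ z := by linarith
  have hz3 : (3:ℝ) ≤ z := by linarith
  have hzSm : 2*S/m ≤ z := by linarith
  have hsinv : (0:ℝ) < s⁻¹ := by positivity
  have hsSinv : S⁻¹ ≤ s⁻¹ := by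
    apply inv_anti₀ hs hsS
  -- the Bessel argument
  have hX0 : (0:ℝ) < z*ζ/s := by positivity
  have hX2 : (2:ℝ) ≤ z*ζ/s := by
    rw [le_div_iff₀ hs]
    have h1 : 2*S ≤ z*m := by
      rw [div_le_iff₀ hm] at hzSm; linarith
    have h2 : z*m ≤ z*ζ := mul_le_mul_of_nonneg_left hmζ hz0.le
    linarith
  -- abbreviations
  set A := Real.sqrt (z*ζ) with hA_def
  set E := Real.exp (-(z^2+ζ^2)/(2*s)) with hE_def
  set X := z*ζ/s with hX_def
  set W : ℝ := Cb * ((X/2)^((b-1/2)+1) * Real.exp (2*X)) with hW_def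
  have hE0 : 0 < E := Real.exp_pos _
  have hA_lb : Real.sqrt m ≤ A := Real.sqrt_le_sqrt (by nlinarith)
  have hA0 : 0 < A := lt_of_lt_of_le hsm hA_lb
  have hA_ub : A ≤ (M+1)*z := by
    rw [hA_def, show (M+1)*z = Real.sqrt (((M+1)*z)^2) from
      (Real.sqrt_sq (by positivity)).symm]
    apply Real.sqrt_le_sqrt
    have e1 : z*ζ ≤ z*M := mul_le_mul_of_nonneg_left hζM hz0.le
    have hzsq : z ≤ z^2 := by rw [pow_two]; exact le_mul_of_one_le_left hz0.le hz1
    have e3 : z*M ≤ z^2*M := mul_le_mul_of_nonneg_right hzsq hM0.le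
    have e4 : M ≤ (M+1)^2 := by
      have hsqM := sq_nonneg M
      have heM : (M+1)^2 = M^2+2*M+1 := by ring
      linarith only [hsqM, heM, hM0]
    have e5 : z^2*M ≤ z^2*(M+1)^2 := mul_le_mul_of_nonneg_left e4 (sq_nonneg z)
    calc z*ζ ≤ z*M := e1
      _ ≤ z^2*M := e3
      _ ≤ z^2*(M+1)^2 := e5
      _ = ((M+1)*z)^2 := by ring
  have hB0 : (0:ℝ) ≤ (ζ/z)^b := Real.rpow_nonneg (by positivity) _
  have hB : (ζ/z)^b ≤ 1 := Real.rpow_le_one (by positivity) ((div_le_one hz0).2 hζz) (by linarith)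
  have hI0nn : 0 ≤ besselI (b-1/2) X := besselI_nonneg hν hX0.le
  have hI1nn : 0 ≤ besselI' (b-1/2) X := besselI'_nonneg hν hX0.le
  have hWnn : 0 ≤ W := by
    have : (0:ℝ) ≤ (X/2)^((b-1/2)+1) := Real.rpow_nonneg (by positivity) _
    positivity
  have hI0W : besselI (b-1/2) X ≤ W := besselI_bound hν hX2
  have hI1W : besselI' (b-1/2) X ≤ W := besselI'_bound hν hX2
  -- bound on B'
  have hB'base : (ζ/z)^(b-1) ≤ 1 + z/m := by
    rcases le_or_gt 1 b with hb1|hb1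
    · have : (ζ/z)^(b-1) ≤ 1 :=
        Real.rpow_le_one (by positivity) ((div_le_one hz0).2 hζz) (by linarith)
      have : (0:ℝ) ≤ z/m := by positivity
      linarith
    · have he : (ζ/z)^(b-1) = (z/ζ)^(1-b) := by
        rw [show b-1 = -(1-b) by ring, Real.rpow_neg (by positivity),
          ← Real.inv_rpow (by positivity), inv_div]
      rw [he]
      have h1 : (z/ζ)^(1-b) ≤ (z/m)^(1-b) := by
        apply Real.rpow_le_rpow (by positivity) _ (by linarith)
        apply div_le_div_of_nonneg_left hz0.le hm hmζ
      have h2 : (z/m)^(1-b) ≤ (z/m)^(1:ℝ) := by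
        apply Real.rpow_le_rpow_of_exponent_le _ (by linarith)
        rw [le_div_iff₀ hm]; linarith
      rw [Real.rpow_one] at h2
      have : (0:ℝ) ≤ z/m := by positivity
      linarith
  have hB' : b * (ζ/z)^(b-1) / z ≤ b*(1+1/m) := by
    have h1 : b * (ζ/z)^(b-1) / z ≤ b * (1 + z/m) / z := by
      gcongr
    refine h1.trans ?_
    rw [div_le_iff₀ hz0]
    have h2 : (1:ℝ)/z ≤ 1 := by rw [div_le_one hz0]; linarith
    have hbm : (0:ℝ) ≤ b := by linarith
    have : b * (1 + z/m) = b*z/m + b := by field_simp; ring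
    have h3 : b*(1+1/m)*z = b*z + b*z/m := by field_simp
    rw [this, h3]
    have : b ≤ b*z := le_mul_of_one_le_right hb0 hz1
    linarith
  have hB'0 : 0 ≤ b * (ζ/z)^(b-1) / z := by
    have : (0:ℝ) ≤ (ζ/z)^(b-1) := Real.rpow_nonneg (by positivity) _
    have hbm : (0:ℝ) ≤ b := by linarith
    positivity
  -- bound on d1
  have hd1 : z/(2*A)/s ≤ 1/(2*Real.sqrt m) * (z*s⁻¹) := by
    have h1 : z/(2*A)/s ≤ z/(2*Real.sqrt m)/s := by gcongr
    refine h1.trans (le_of_eq ?_)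
    field_simp
  have hd10 : 0 ≤ z/(2*A)/s := by positivity
  -- W expansion
  have hnν : (b-1/2)+1 ≤ (n:ℝ) := by
    have := Nat.le_ceil (b-1/2)
    rw [hn_def]; push_cast; linarith
  have hWle : W ≤ Cb * ((M+1)^n * (z^n * ((1+s⁻¹)^n * Real.exp (2*X)))) := by
    have h1 : (X/2)^((b-1/2)+1) ≤ (z*(M*s⁻¹))^((b-1/2)+1) := by
      apply Real.rpow_le_rpow (by positivity) _ (by linarith)
      rw [hX_def]
      rw [div_div, div_le_iff₀ (by positivity)]
      have : z*(M*s⁻¹)*(s*2) = 2*(z*M) := by field_simp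
      rw [this]
      have e1 : z*ζ ≤ z*M := mul_le_mul_of_nonneg_left hζM hz0.le
      have e2 : (0:ℝ) ≤ z*M := by positivity
      linarith
    have h2 : (z*(M*s⁻¹))^((b-1/2)+1)
        = z^((b-1/2)+1) * (M^((b-1/2)+1) * (s⁻¹)^((b-1/2)+1)) := by
      rw [Real.mul_rpow hz0.le (by positivity), Real.mul_rpow (by positivity) (by positivity)]
    have h3 : z^((b-1/2)+1) ≤ z^n := rpow_le_pow_nat hz1 hnν
    have h4 : M^((b-1/2)+1) ≤ (M+1)^n := by
      calc M^((b-1/2)+1) ≤ (M+1)^((b-1/2)+1) :=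
            Real.rpow_le_rpow (by positivity) (by linarith) (by linarith)
        _ ≤ (M+1)^n := rpow_le_pow_nat (by linarith) hnν
    have h5 : (s⁻¹)^((b-1/2)+1) ≤ (1+s⁻¹)^n := by
      calc (s⁻¹)^((b-1/2)+1) ≤ (1+s⁻¹)^((b-1/2)+1) :=
            Real.rpow_le_rpow (by positivity) (by linarith) (by linarith)
        _ ≤ (1+s⁻¹)^n := rpow_le_pow_nat (by linarith) hnν
    have hz_nn : (0:ℝ) ≤ z^((b-1/2)+1) := Real.rpow_nonneg hz0.le _
    have hM_nn : (0:ℝ) ≤ M^((b-1/2)+1) := Real.rpow_nonneg (by positivity) _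
    have hs_nn : (0:ℝ) ≤ (s⁻¹)^((b-1/2)+1) := Real.rpow_nonneg (by positivity) _
    rw [hW_def]
    have key : (X/2)^((b-1/2)+1) ≤ (M+1)^n * z^n * (1+s⁻¹)^n := by
      refine (h1.trans (le_of_eq h2)).trans ?_
      calc z^((b-1/2)+1) * (M^((b-1/2)+1) * (s⁻¹)^((b-1/2)+1))
          ≤ z^n * ((M+1)^n * (1+s⁻¹)^n) := by
            apply mul_le_mul h3 (mul_le_mul h4 h5 hs_nn (by positivity)) (by positivity)
              (by positivity)
        _ = (M+1)^n * z^n * (1+s⁻¹)^n := by ring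
    calc Cb * ((X/2)^((b-1/2)+1) * Real.exp (2*X))
        ≤ Cb * (((M+1)^n * z^n * (1+s⁻¹)^n) * Real.exp (2*X)) := by
          apply mul_le_mul_of_nonneg_left _ hCb
          apply mul_le_mul_of_nonneg_right key (Real.exp_pos _).le
      _ = Cb * ((M+1)^n * (z^n * ((1+s⁻¹)^n * Real.exp (2*X)))) := by ring
  -- the derivative and its decomposition
  rw [(kernel_hasDerivAt hν hs hz0 hζ0).deriv]
  set d1 := z/(2*A)/s with hd1_def
  set B := (ζ/z)^b with hBdef
  set B' := b * (ζ/z)^(b-1) / z with hB'def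
  set I0 := besselI (b-1/2) X with hI0_def
  set I1 := besselI' (b-1/2) X with hI1_def
  have hdecomp : ((d1 * B + A/s*B')*E + A/s*B*(E*(-(ζ/s))))*I0 + A/s*B*E*(I1*(z/s))
      = d1*B*E*I0 + A/s*B'*E*I0 + -(A/s*B*(E*(ζ/s))*I0) + A/s*B*E*(I1*(z/s)) := by
    ring
  rw [hdecomp]
  -- term bounds
  have hAs0 : 0 ≤ A/s := by positivity
  have hAs : A/s ≤ (M+1)*(z*s⁻¹) := by
    rw [div_eq_mul_inv]
    calc A * s⁻¹ ≤ ((M+1)*z) * s⁻¹ := by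
          apply mul_le_mul_of_nonneg_right hA_ub hsinv.le
      _ = (M+1)*(z*s⁻¹) := by ring
  have hT1 : d1*B*E*I0 ≤ (1/(2*Real.sqrt m)) * (z*s⁻¹) * 1 * E * W := by
    apply mul_le_mul (mul_le_mul (mul_le_mul hd1 hB hB0 (by positivity)) le_rfl hE0.le
      (by positivity)) hI0W hI0nn (by positivity)
  have hT2 : A/s*B'*E*I0 ≤ ((M+1)*(z*s⁻¹)) * (b*(1+1/m)) * E * W := by
    apply mul_le_mul (mul_le_mul (mul_le_mul hAs hB' hB'0 (by positivity)) le_rfl hE0.le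
      (by positivity)) hI0W hI0nn (by positivity)
  have hT3 : A/s*B*(E*(ζ/s))*I0 ≤ ((M+1)*(z*s⁻¹)) * 1 * (E*(M*s⁻¹)) * W := by
    apply mul_le_mul _ hI0W hI0nn _
    · apply mul_le_mul (mul_le_mul hAs hB hB0 (by positivity)) _ (by positivity) (by positivity)
      apply mul_le_mul_of_nonneg_left _ hE0.le
      rw [div_eq_mul_inv]
      apply mul_le_mul_of_nonneg_right hζM hsinv.le
    · positivity
  have hT4 : A/s*B*E*(I1*(z/s)) ≤ ((M+1)*(z*s⁻¹)) * 1 * E * (W*(z*s⁻¹)) := by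
    apply mul_le_mul (mul_le_mul (mul_le_mul hAs hB hB0 (by positivity)) le_rfl hE0.le
      (by positivity)) _ (by positivity) (by positivity)
    rw [div_eq_mul_inv]
    exact mul_le_mul hI1W le_rfl (by positivity) hWnn
  -- canonical variable u = z/s
  set u := z*s⁻¹ with hu_def
  have hu0 : 0 < u := by positivity
  have hu1 : (1:ℝ) ≤ u := by
    rw [hu_def]
    have h8 : 8*S*S⁻¹ ≤ z*s⁻¹ := by
      apply mul_le_mul hz8S hsSinv (by positivity) hz0.le
    rw [mul_inv_cancel_right₀ (ne_of_gt hS)] at h8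
    linarith only [h8]
  have huu : u ≤ u^2 := by rw [pow_two]; exact le_mul_of_one_le_left hu0.le hu1
  have hEW : 0 ≤ E*W := mul_nonneg hE0.le hWnn
  have hsu : s⁻¹ ≤ u := le_mul_of_one_le_left hsinv.le hz1
  -- triangle inequality
  have habs : |d1*B*E*I0 + A/s*B'*E*I0 + -(A/s*B*(E*(ζ/s))*I0) + A/s*B*E*(I1*(z/s))|
      ≤ d1*B*E*I0 + A/s*B'*E*I0 + A/s*B*(E*(ζ/s))*I0 + A/s*B*E*(I1*(z/s)) := by
    have n1 : 0 ≤ d1*B*E*I0 := by positivity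
    have n2 : 0 ≤ A/s*B'*E*I0 := by positivity
    have n3 : 0 ≤ A/s*B*(E*(ζ/s))*I0 := by positivity
    have n4 : 0 ≤ A/s*B*E*(I1*(z/s)) := by positivity
    calc |d1*B*E*I0 + A/s*B'*E*I0 + -(A/s*B*(E*(ζ/s))*I0) + A/s*B*E*(I1*(z/s))|
        ≤ |d1*B*E*I0 + A/s*B'*E*I0 + -(A/s*B*(E*(ζ/s))*I0)| + |A/s*B*E*(I1*(z/s))| :=
          abs_add_le _ _
      _ ≤ (|d1*B*E*I0 + A/s*B'*E*I0| + |(-(A/s*B*(E*(ζ/s))*I0))|) + |A/s*B*E*(I1*(z/s))| := by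
          have := abs_add_le (d1*B*E*I0 + A/s*B'*E*I0) (-(A/s*B*(E*(ζ/s))*I0))
          linarith only [this]
      _ ≤ ((|d1*B*E*I0| + |A/s*B'*E*I0|) + |(-(A/s*B*(E*(ζ/s))*I0))|) + |A/s*B*E*(I1*(z/s))| := by
          have := abs_add_le (d1*B*E*I0) (A/s*B'*E*I0)
          linarith only [this]
      _ = d1*B*E*I0 + A/s*B'*E*I0 + A/s*B*(E*(ζ/s))*I0 + A/s*B*E*(I1*(z/s)) := by
          rw [abs_neg, abs_of_nonneg n1, abs_of_nonneg n2, abs_of_nonneg n3, abs_of_nonneg n4]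
  -- exponential combination
  have hEX : E * Real.exp (2*X) ≤ Real.exp (-(z^2*s⁻¹)/4) := by
    rw [hE_def, ← Real.exp_add]
    apply Real.exp_le_exp.2
    rw [hX_def]
    have heq : -(z^2+ζ^2)/(2*s) + 2*(z*ζ/s) = -((z^2 - 4*(z*ζ) + ζ^2)*s⁻¹)/2 := by
      field_simp
      ring
    rw [heq]
    have hkey : z^2/2 ≤ z^2 - 4*(z*ζ) + ζ^2 := by
      have e1 : z*ζ ≤ z*M := mul_le_mul_of_nonneg_left hζM hz0.le
      have e2 : 8*M*z ≤ z^2 := by rw [pow_two]; exact mul_le_mul_of_nonneg_right hz8M hz0.le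
      have e3 := sq_nonneg ζ
      rw [sq] at e3
      linarith only [e1, e2, e3]
    have := mul_le_mul_of_nonneg_right hkey hsinv.le
    linarith only [this]
  -- final chain
  have hfinal : d1*B*E*I0 + A/s*B'*E*I0 + A/s*B*(E*(ζ/s))*I0 + A/s*B*E*(I1*(z/s))
      ≤ c₀ * Cb * (M+1)^n * (1+S)^(n+2) * (Nat.factorial (n+2) : ℝ)
          * z^(n+2) * Real.exp (-z) := by
    have k2 : ((M+1)*(b*(1+1/m)))*u ≤ ((M+1)*(b*(1+1/m)))*u^2 :=
      mul_le_mul_of_nonneg_left huu (by positivity)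
    have k3 : s⁻¹*u ≤ u^2 := by rw [pow_two]; exact mul_le_mul_of_nonneg_right hsu hu0.le
    have k3' : ((M+1)*M)*(s⁻¹*u) ≤ ((M+1)*M)*u^2 :=
      mul_le_mul_of_nonneg_left k3 (by positivity)
    have k1 : (1/(2*Real.sqrt m))*u ≤ (1/(2*Real.sqrt m))*u^2 :=
      mul_le_mul_of_nonneg_left huu (by positivity)
    calc d1*B*E*I0 + A/s*B'*E*I0 + A/s*B*(E*(ζ/s))*I0 + A/s*B*E*(I1*(z/s))
        ≤ (1/(2*Real.sqrt m))*(z*s⁻¹)*1*E*W + ((M+1)*(z*s⁻¹))*(b*(1+1/m))*E*W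
            + ((M+1)*(z*s⁻¹))*1*(E*(M*s⁻¹))*W + ((M+1)*(z*s⁻¹))*1*E*(W*(z*s⁻¹)) := by
          exact add_le_add (add_le_add (add_le_add hT1 hT2) hT3) hT4
      _ = ((1/(2*Real.sqrt m))*u + ((M+1)*(b*(1+1/m)))*u + ((M+1)*M)*(s⁻¹*u)
            + (M+1)*u^2) * (E*W) := by rw [hu_def]; ring
      _ ≤ ((1/(2*Real.sqrt m))*u^2 + ((M+1)*(b*(1+1/m)))*u^2 + ((M+1)*M)*u^2
            + (M+1)*u^2) * (E*W) := by
          apply mul_le_mul_of_nonneg_right _ hEW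
          linarith only [k1, k2, k3']
      _ = c₀ * (u^2 * (E*W)) := by rw [hc₀_def]; ring
      _ ≤ c₀ * (u^2 * (E * (Cb * ((M+1)^n * (z^n * ((1+s⁻¹)^n * Real.exp (2*X))))))) := by
          apply mul_le_mul_of_nonneg_left _ hc₀
          apply mul_le_mul_of_nonneg_left _ (by positivity)
          exact mul_le_mul_of_nonneg_left hWle hE0.le
      _ = (c₀ * Cb * (M+1)^n) * (z^(n+2) * ((s⁻¹^2 * (1+s⁻¹)^n) * (E * Real.exp (2*X)))) := by
          rw [hu_def]; ring
      _ ≤ (c₀ * Cb * (M+1)^n) * (z^(n+2) * ((1+s⁻¹)^(n+2) * (E * Real.exp (2*X)))) := by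
          apply mul_le_mul_of_nonneg_left _ (by positivity)
          apply mul_le_mul_of_nonneg_left _ (by positivity)
          apply mul_le_mul_of_nonneg_right _ (by positivity)
          have e1 : s⁻¹^2 ≤ (1+s⁻¹)^2 := pow_le_pow_left₀ hsinv.le (by linarith) _
          calc s⁻¹^2*(1+s⁻¹)^n ≤ (1+s⁻¹)^2*(1+s⁻¹)^n :=
                mul_le_mul_of_nonneg_right e1 (by positivity)
            _ = (1+s⁻¹)^(n+2) := by rw [← pow_add]; congr 1; omega
      _ ≤ (c₀ * Cb * (M+1)^n) * (z^(n+2) * (((1+S)^(n+2) * s⁻¹^(n+2))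
            * Real.exp (-(z^2*s⁻¹)/4))) := by
          apply mul_le_mul_of_nonneg_left _ (by positivity)
          apply mul_le_mul_of_nonneg_left _ (by positivity)
          have h1S : 1+s⁻¹ ≤ (1+S)*s⁻¹ := by
            have hS1 : (1:ℝ) ≤ S*s⁻¹ := by
              have h := mul_le_mul_of_nonneg_left hsSinv hS.le
              rw [mul_inv_cancel₀ (ne_of_gt hS)] at h
              linarith only [h]
            linarith only [hS1, hsinv.le]
          have hleft : (1+s⁻¹)^(n+2) ≤ (1+S)^(n+2)*s⁻¹^(n+2) := by
            calc (1+s⁻¹)^(n+2) ≤ ((1+S)*s⁻¹)^(n+2) := pow_le_pow_left₀ (by positivity) h1S _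
              _ = (1+S)^(n+2)*s⁻¹^(n+2) := mul_pow _ _ _
          exact mul_le_mul hleft hEX (by positivity) (by positivity)
      _ ≤ (c₀ * Cb * (M+1)^n) * (z^(n+2) * ((1+S)^(n+2)
            * ((Nat.factorial (n+2) : ℝ) * Real.exp (-z)))) := by
          apply mul_le_mul_of_nonneg_left _ (by positivity)
          apply mul_le_mul_of_nonneg_left _ (by positivity)
          rw [mul_assoc]
          apply mul_le_mul_of_nonneg_left _ (by positivity)
          have h8 : (8:ℝ) ≤ z^2 := by
            have h9 := mul_le_mul hz3 hz3 (by norm_num : (0:ℝ) ≤ 3) hz0.le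
            rw [pow_two]; linarith only [h9]
          have hc1 : s⁻¹ ≤ z^2*s⁻¹/8 := by
            have := mul_le_mul_of_nonneg_right h8 hsinv.le
            linarith only [this, hsinv.le]
          have hc2 : s⁻¹^(n+2) ≤ (z^2*s⁻¹/8)^(n+2) := pow_le_pow_left₀ hsinv.le hc1 _
          have hc4 : s⁻¹^(n+2) ≤ (Nat.factorial (n+2):ℝ) * Real.exp (z^2*s⁻¹/8) :=
            hc2.trans (pow_le_fact_mul_exp (by positivity) _)
          calc s⁻¹^(n+2)*Real.exp (-(z^2*s⁻¹)/4)
              ≤ ((Nat.factorial (n+2):ℝ) * Real.exp (z^2*s⁻¹/8))*Real.exp (-(z^2*s⁻¹)/4) :=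
                mul_le_mul_of_nonneg_right hc4 (Real.exp_pos _).le
            _ = (Nat.factorial (n+2):ℝ) * Real.exp (z^2*s⁻¹/8 + -(z^2*s⁻¹)/4) := by
                rw [mul_assoc, ← Real.exp_add]
            _ ≤ (Nat.factorial (n+2):ℝ) * Real.exp (-z) := by
                apply mul_le_mul_of_nonneg_left _ (by positivity)
                apply Real.exp_le_exp.2
                have h1 : z*(8*S) ≤ z*z := mul_le_mul_of_nonneg_left hz8S hz0.le
                have h4 : 8*z*S ≤ z^2 := by rw [pow_two]; linarith only [h1]
                have h2 : z^2*S⁻¹ ≤ z^2*s⁻¹ := mul_le_mul_of_nonneg_left hsSinv (by positivity)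
                have h3 : 8*z ≤ z^2*S⁻¹ := by
                  apply le_of_mul_le_mul_right _ hS
                  have he : z^2*S⁻¹*S = z^2 := by field_simp
                  rw [he]
                  linarith only [h4]
                linarith only [h2, h3]
      _ = c₀ * Cb * (M+1)^n * (1+S)^(n+2) * (Nat.factorial (n+2) : ℝ)
            * z^(n+2) * Real.exp (-z) := by ring
  have hNeq : (⌈b - 1/2⌉₊ + 3) = n + 2 := by rw [hn_def]
  rw [hNeq]
  calc |d1*B*E*I0 + A/s*B'*E*I0 + -(A/s*B*(E*(ζ/s))*I0) + A/s*B*E*(I1*(z/s))|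
      ≤ d1*B*E*I0 + A/s*B'*E*I0 + A/s*B*(E*(ζ/s))*I0 + A/s*B*E*(I1*(z/s)) := habs
    _ ≤ _ := hfinal


end BesselAux

open BesselAux in
/-- the single-layer Bessel potential vanishes at spatial infinity:
`q(τ,z) = ∫_0^τ Ψ(k)·[∂q_{τ−k}(z,ζ,b)/∂ζ]|_{ζ=y(k)} dk → 0` as `z → ∞`. -/
theorem bessel_potential_vanishes_at_infinity
    (b T' : ℝ) (hb : 1 / 2 ≤ b) (hT' : 0 < T')
    (y Ψ : ℝ → ℝ)
    (hy : ContinuousOn y (Set.Icc 0 T'))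
    (hypos : ∀ k ∈ Set.Icc (0 : ℝ) T', 0 < y k)
    (hΨ : ContinuousOn Ψ (Set.Icc 0 T'))
    (τ : ℝ) (hτ : τ ∈ Set.Ioc 0 T') :
    Filter.Tendsto
      (fun z => ∫ k in (0 : ℝ)..τ,
        Ψ k * deriv (fun ζ => besselKernel b (τ - k) z ζ) (y k))
      Filter.atTop (nhds 0) := by
  obtain ⟨hτ0, hτT⟩ := hτ
  have hIccsub : Set.Icc (0:ℝ) τ ⊆ Set.Icc 0 T' := Set.Icc_subset_Icc le_rfl hτT
  have hy' : ContinuousOn y (Set.Icc 0 τ) := hy.mono hIccsub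
  have hΨ' : ContinuousOn Ψ (Set.Icc 0 τ) := hΨ.mono hIccsub
  have hcomp : IsCompact (Set.Icc (0:ℝ) τ) := isCompact_Icc
  have hne : (Set.Icc (0:ℝ) τ).Nonempty := Set.nonempty_Icc.2 hτ0.le
  obtain ⟨km, hkmmem, hkmmin⟩ := hcomp.exists_isMinOn hne hy'
  obtain ⟨kM, hkMmem, hkMmax⟩ := hcomp.exists_isMaxOn hne hy'
  have hkm : ∀ k ∈ Set.Icc (0:ℝ) τ, y km ≤ y k := fun k hk => hkmmin hk
  have hkM : ∀ k ∈ Set.Icc (0:ℝ) τ, y k ≤ y kM := fun k hk => hkMmax hk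
  set m := y km with hm_def
  set M := y kM with hM_def
  have hm : 0 < m := hypos km (hIccsub hkmmem)
  have hmM : m ≤ M := hkm kM hkMmem
  obtain ⟨P, hP⟩ := hcomp.exists_bound_of_continuousOn hΨ'
  have hP0 : 0 ≤ P := le_trans (norm_nonneg _) (hP 0 ⟨le_rfl, hτ0.le⟩)
  obtain ⟨C, hC0, hC⟩ := kernel_deriv_bound b τ m M hb hm hmM hτ0
  set N := ⌈b - 1/2⌉₊ + 3 with hN_def
  set Z₀ := 8*M + 2*τ/m + 8*τ + 9 with hZ₀_def
  apply squeeze_zero_norm' (a := fun z => (P * (C * z^N * Real.exp (-z))) * τ)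
  · filter_upwards [eventually_ge_atTop Z₀] with z hz
    have hz0 : (0:ℝ) < z := by
      have h1 : (0:ℝ) < 2*τ/m := by positivity
      have h2 : (0:ℝ) < M := lt_of_lt_of_le hm hmM
      rw [hZ₀_def] at hz
      linarith
    rw [Real.norm_eq_abs]
    have key : ∀ k ∈ Set.uIoc (0:ℝ) τ,
        ‖Ψ k * deriv (fun ζ => besselKernel b (τ-k) z ζ) (y k)‖
          ≤ P * (C * z^N * Real.exp (-z)) := by
      intro k hk
      rw [Set.uIoc_of_le hτ0.le] at hk
      have hmem : k ∈ Set.Icc (0:ℝ) τ := ⟨hk.1.le, hk.2⟩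
      rcases eq_or_lt_of_le hk.2 with hkτ|hkτ
      · -- k = τ : the kernel vanishes identically
        have hzero : (fun ζ => besselKernel b (τ-k) z ζ) = fun _ => (0:ℝ) := by
          funext ζ
          rw [hkτ]
          simp [besselKernel]
        rw [hzero, deriv_const]
        have : (0:ℝ) ≤ Real.exp (-z) := (Real.exp_pos _).le
        simp only [mul_zero, norm_zero]
        positivity
      · have hs : 0 < τ - k := by linarith
        have hsS : τ - k ≤ τ := by linarith [hk.1]
        have hyb1 : m ≤ y k := hkm k hmem
        have hyb2 : y k ≤ M := hkM k hmem
        have hder := hC z (τ-k) (y k) hz hs hsS hyb1 hyb2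
        rw [norm_mul]
        have h2 : ‖deriv (fun ζ => besselKernel b (τ-k) z ζ) (y k)‖
            ≤ C * z^N * Real.exp (-z) := by
          rw [Real.norm_eq_abs]
          exact hder
        exact mul_le_mul (hP k hmem) h2 (norm_nonneg _) hP0
    have hbound := intervalIntegral.norm_integral_le_of_norm_le_const key
    rw [Real.norm_eq_abs] at hbound
    simpa [abs_of_nonneg hτ0.le] using hbound
  · have h0 : Tendsto (fun z : ℝ => z^N * Real.exp (-z)) atTop (nhds 0) :=
      tendsto_pow_mul_exp_neg_atTop_nhds_zero N
    have heq : (fun z => (P * (C * z^N * Real.exp (-z))) * τ)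
        = fun z => ((P*C) * (z^N * Real.exp (-z))) * τ := by
      funext z; ring
    rw [heq]
    have := (h0.const_mul (P*C)).mul_const τ
    simpa using this
end
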